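/- arXiv:1908.06789 — 7 statements merged into one kernel-verified Lean document; each statement's English description precedes it below -/
import Mathlib

section
/- For every integer n ≥ 0, σmex(n) = Σ_{k ≥ 0} p(n − k(k+1)/2), where p is the partition function and terms with negative argument are zero. -/
open scoped Classical

/-- The minimal excludant of a partition: the least positive integer not a part. -/
noncomputable def Nat.Partition.mex {n : ℕ} (l : n.Partition) : ℕ :=
  sInf {k : ℕ | 0 < k ∧ k ∉ l.parts}

/-- Sum of minimal excludants over all partitions of `n`. -/
noncomputable def sigmaMex (n : ℕ) : ℕ := ∑ l : Nat.Partition n, l.mex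

/-- `sigmaMex` extended to ℤ by zero on negatives. -/
noncomputable def sigmaMexZ (n : ℤ) : ℤ := if 0 ≤ n then sigmaMex n.toNat else 0

/-- The partition function, extended to ℤ by zero on negatives. -/
noncomputable def partitionsZ (n : ℤ) : ℤ :=
  if 0 ≤ n then Fintype.card (Nat.Partition n.toNat) else 0

/-- `M_k(n)`: partitions of `n` whose mex is `k` with more parts `> k` than parts `< k`. -/
noncomputable def Mfun (k n : ℕ) : ℕ :=
  Nat.card {l : Nat.Partition n //
    l.mex = k ∧ (l.parts.filter fun t => t < k).card < (l.parts.filter fun t => k < t).card}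

noncomputable def MfunZ (k : ℕ) (n : ℤ) : ℤ := if 0 ≤ n then Mfun k n.toNat else 0

/-- A multiset of colored parts is a colored partition of `n`. -/
def IsColoredPartition {c : ℕ} (n : ℕ) (m : Multiset (ℕ × Fin c)) : Prop :=
  (∀ p ∈ m, 0 < p.1) ∧ (m.map Prod.fst).sum = n

/-- Number of partitions of `n` into distinct two-colored parts. -/
noncomputable def D2 (n : ℕ) : ℕ :=
  Nat.card {m : Multiset (ℕ × Fin 2) // IsColoredPartition n m ∧ m.Nodup}

/-- Number of partitions of `n` into distinct parts. -/
def D1 (n : ℕ) : ℕ := (Nat.Partition.distincts n).card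

/-- Indicator of triangular numbers. -/
noncomputable def deltaTri (n : ℤ) : ℤ := if ∃ m : ℤ, 2 * n = m * (m + 1) then 1 else 0

/-- `δ'(n) = (-1)^m` if `n = m(3m-1)` for some integer `m`, else `0`. -/
noncomputable def deltaPent (n : ℤ) : ℤ :=
  ∑' m : ℤ, if n = m * (3 * m - 1) then (if Even m then (1 : ℤ) else -1) else 0

/-- Overpartition: positive parts summing to `n`, overlined (`true`) parts occur at most once
per size. -/
def IsOverpartition (n : ℕ) (m : Multiset (ℕ × Bool)) : Prop :=
  (∀ p ∈ m, 0 < p.1) ∧ (m.map Prod.fst).sum = n ∧ ∀ s : ℕ, m.count (s, true) ≤ 1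

/-- Overpartitions of `n` in which the largest part size exceeding `k` appears at least
`k+1` times. -/
noncomputable def Mbar (k n : ℕ) : ℕ :=
  Nat.card {m : Multiset (ℕ × Bool) // IsOverpartition n m ∧
    ∃ s ∈ m.map Prod.fst, k < s ∧ (∀ t ∈ m.map Prod.fst, k < t → t ≤ s) ∧
      k + 1 ≤ (m.map Prod.fst).count s}

noncomputable def MbarZ (k : ℕ) (n : ℤ) : ℤ := if 0 ≤ n then Mbar k n.toNat else 0

/-- `D₂*(n)`: two-colored distinct partitions with gap-free color-0 parts and even
color-1 parts. -/
noncomputable def D2star (n : ℕ) : ℕ :=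
  Nat.card {m : Multiset (ℕ × Fin 2) // IsColoredPartition n m ∧ m.Nodup ∧
    (∃ j : ℕ, (m.filter fun p => p.2 = 0).map Prod.fst = (Multiset.range j).map (· + 1)) ∧
    ∀ p ∈ m, p.2 = 1 → Even p.1}

/-- Partitions of `n` in which odd parts are not repeated. -/
noncomputable def pod (n : ℕ) : ℕ :=
  Nat.card {l : Nat.Partition n // ∀ t : ℕ, Odd t → l.parts.count t ≤ 1}

/-- `MP_k(n)`: partitions where the largest part exceeding `2k-1` is odd and appears
exactly `k` times, all other odd parts appearing at most once. -/
noncomputable def MPfun (k n : ℕ) : ℕ :=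
  Nat.card {l : Nat.Partition n // ∃ s ∈ l.parts, 2 * k - 1 < s ∧
    (∀ t ∈ l.parts, 2 * k - 1 < t → t ≤ s) ∧ Odd s ∧ l.parts.count s = k ∧
    ∀ t ∈ l.parts, Odd t → t ≠ s → l.parts.count t ≤ 1}

/-- The `r`-gap of a partition: least positive integer appearing fewer than `r` times. -/
noncomputable def Nat.Partition.rgap {n : ℕ} (r : ℕ) (l : n.Partition) : ℕ :=
  sInf {k : ℕ | 0 < k ∧ l.parts.count k < r}

/-- Sum of the `r`-gaps of all partitions of `n`. -/
noncomputable def sigmaMexR (r n : ℕ) : ℕ := ∑ l : Nat.Partition n, l.rgap r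

/-- Two-colored partitions: color-0 parts distinct and divisible by `r`; each color-1
part size occurs at most `2r-1` times. -/
noncomputable def Dtilde (r n : ℕ) : ℕ :=
  Nat.card {m : Multiset (ℕ × Fin 2) // IsColoredPartition n m ∧
    (m.filter fun p => p.2 = 0).Nodup ∧ (∀ p ∈ m, p.2 = 0 → r ∣ p.1) ∧
    ∀ s : ℕ, m.count (s, 1) ≤ 2 * r - 1}

/-- `D₁(x/2)` when `x` is a non-negative even integer, `0` otherwise. -/
noncomputable def D1half (x : ℤ) : ℤ := if 0 ≤ x ∧ 2 ∣ x then D1 (x / 2).toNat else 0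

/-- `j = |r| - 1/2 + sign(r)·(-1)^r/2`. -/
def jOf (r : ℤ) : ℤ :=
  if 0 ≤ r then (if Even r then r else r - 1) else (if Even r then -r - 1 else -r)

/-- `D₃^{(k)}(n)`: three-colored distinct partitions satisfying the conditions of
Proposition 3.2. -/
noncomputable def D3 (k n : ℕ) : ℕ :=
  Nat.card {m : Multiset (ℕ × Fin 3) // IsColoredPartition n m ∧ m.Nodup ∧
    (m.filter fun p => p.2 = 2).card = k ∧
    (1 < k → ∀ a ∈ (m.filter fun p => p.2 = 2).map Prod.fst,
        ∀ b ∈ (m.filter fun p => p.2 = 2).map Prod.fst, b < 2 * a) ∧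
    ∃ a b : ℕ,
      a ∈ (m.filter fun p => (p.2 : ℕ) =
        (jOf (((m.filter fun q => q.2 = 0).card : ℤ) -
          ((m.filter fun q => q.2 = 1).card : ℤ)) % 2).toNat).map Prod.fst ∧
      (∀ t ∈ (m.filter fun p => (p.2 : ℕ) =
        (jOf (((m.filter fun q => q.2 = 0).card : ℤ) -
          ((m.filter fun q => q.2 = 1).card : ℤ)) % 2).toNat).map Prod.fst, t ≤ a) ∧
      b ∈ (m.filter fun p => p.2 = 2).map Prod.fst ∧
      (∀ t ∈ (m.filter fun p => p.2 = 2).map Prod.fst, b ≤ t) ∧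
      (a : ℤ) = jOf (((m.filter fun q => q.2 = 0).card : ℤ) -
          ((m.filter fun q => q.2 = 1).card : ℤ)) + b}

def triM (k : ℕ) : Multiset ℕ := (Multiset.range k).map (· + 1)

lemma triM_sum_two (k : ℕ) : 2 * (triM k).sum = k * (k + 1) := by
  induction k with
  | zero => simp [triM]
  | succ k ih =>
    have h : triM (k + 1) = (k + 1) ::ₘ triM k := by
      simp [triM, Multiset.range_succ]
    rw [h, Multiset.sum_cons, mul_add, ih]; ring

lemma mem_triM {j k : ℕ} : j ∈ triM k ↔ 1 ≤ j ∧ j ≤ k := by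
  simp only [triM, Multiset.mem_map, Multiset.mem_range]
  constructor
  · rintro ⟨i, hi, rfl⟩; omega
  · rintro ⟨h1, h2⟩; exact ⟨j - 1, by omega, by omega⟩

lemma triM_nodup (k : ℕ) : (triM k).Nodup :=
  (Multiset.nodup_range k).map (fun a b => by omega)

lemma msum_le {s t : Multiset ℕ} (h : s ≤ t) : s.sum ≤ t.sum := by
  obtain ⟨u, rfl⟩ := Multiset.le_iff_exists_add.mp h
  simp

lemma part_le {n : ℕ} (l : Nat.Partition n) {a : ℕ} (h : a ∈ l.parts) : a ≤ n := by
  have : {a} ≤ l.parts := by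
    rwa [Multiset.singleton_le]
  have := msum_le this
  simpa [l.parts_sum] using this

lemma mex_spec {n : ℕ} (l : Nat.Partition n) :
    (0 < l.mex ∧ l.mex ∉ l.parts) ∧ l.mex ≤ n + 1 := by
  have hmem : n + 1 ∈ {k : ℕ | 0 < k ∧ k ∉ l.parts} := by
    refine ⟨by omega, fun h => ?_⟩
    have := part_le l h; omega
  exact ⟨Nat.sInf_mem ⟨_, hmem⟩, Nat.sInf_le hmem⟩

lemma triM_le_iff {n : ℕ} (l : Nat.Partition n) (k : ℕ) :
    triM k ≤ l.parts ↔ k < l.mex := by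
  rw [Multiset.le_iff_subset (triM_nodup k)]
  obtain ⟨⟨hpos, hnm⟩, _⟩ := mex_spec l
  constructor
  · intro h
    by_contra hk
    exact hnm (h (mem_triM.mpr ⟨hpos, by omega⟩))
  · intro h j hj
    obtain ⟨h1, h2⟩ := mem_triM.mp hj
    by_contra hjp
    have : l.mex ≤ j := Nat.sInf_le ⟨by omega, hjp⟩
    omega

lemma mex_eq_sum {n : ℕ} (l : Nat.Partition n) :
    l.mex = ∑ k ∈ Finset.range (n + 2), if triM k ≤ l.parts then 1 else 0 := by
  obtain ⟨_, hle⟩ := mex_spec l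
  rw [← Finset.card_filter]
  have : (Finset.range (n + 2)).filter (fun k => triM k ≤ l.parts)
      = Finset.range l.mex := by
    ext k
    simp only [Finset.mem_filter, Finset.mem_range, triM_le_iff]
    omega
  rw [this, Finset.card_range]

noncomputable def triEquiv (k n : ℕ) (h : (triM k).sum ≤ n) :
    {l : Nat.Partition n // triM k ≤ l.parts} ≃ Nat.Partition (n - (triM k).sum) where
  toFun l := ⟨l.1.parts - triM k,
    fun {i} hi => l.1.parts_pos (Multiset.mem_of_le (tsub_le_self) hi),
    by
      have h2 : l.1.parts - triM k + triM k = l.1.parts := tsub_add_cancel_of_le l.2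
      have h3 := congrArg Multiset.sum h2
      rw [Multiset.sum_add, l.1.parts_sum] at h3
      omega⟩
  invFun m := ⟨⟨m.parts + triM k,
      fun {i} hi => by
        rcases Multiset.mem_add.mp hi with h' | h'
        · exact m.parts_pos h'
        · exact (mem_triM.mp h').1,
      by rw [Multiset.sum_add, m.parts_sum]; omega⟩,
    Multiset.le_add_left _ _⟩
  left_inv l := by
    apply Subtype.ext
    apply Nat.Partition.ext
    exact tsub_add_cancel_of_le l.2
  right_inv m := by
    apply Nat.Partition.ext
    simp

lemma card_eq_partitionsZ (n k : ℕ) :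
    partitionsZ ((n : ℤ) - k * (k + 1) / 2)
      = (Fintype.card {l : Nat.Partition n // triM k ≤ l.parts} : ℤ) := by
  have htri : ((k : ℤ) * (k + 1) / 2) = ((triM k).sum : ℤ) := by
    have h : (k : ℤ) * (k + 1) = 2 * ((triM k).sum : ℤ) := by
      exact_mod_cast (triM_sum_two k).symm
    rw [h, Int.mul_ediv_cancel_left _ (by norm_num)]
  rw [htri]
  by_cases h : (triM k).sum ≤ n
  · rw [partitionsZ, if_pos (by omega)]
    have ht : ((n : ℤ) - ((triM k).sum : ℤ)).toNat = n - (triM k).sum := by omega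
    rw [ht, Fintype.card_congr (triEquiv k n h)]
  · rw [partitionsZ, if_neg (by omega)]
    have : IsEmpty {l : Nat.Partition n // triM k ≤ l.parts} := by
      constructor
      rintro ⟨l, hl⟩
      have := msum_le hl
      rw [l.parts_sum] at this
      omega
    rw [Fintype.card_eq_zero]; norm_num

theorem stmt1 (n : ℕ) : (sigmaMex n : ℤ) = ∑' k : ℕ, partitionsZ ((n : ℤ) - k * (k + 1) / 2) := by
  classical
  have hz : ∀ k ∉ Finset.range (n + 2), partitionsZ ((n : ℤ) - k * (k + 1) / 2) = 0 := by
    intro k hk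
    simp only [Finset.mem_range, not_lt] at hk
    rw [card_eq_partitionsZ]
    have h2 := triM_sum_two k
    have hgt : n < (triM k).sum := by nlinarith
    have : IsEmpty {l : Nat.Partition n // triM k ≤ l.parts} := by
      constructor
      rintro ⟨l, hl⟩
      have := msum_le hl
      rw [l.parts_sum] at this
      omega
    rw [Fintype.card_eq_zero]
    norm_num
  rw [tsum_eq_sum hz]
  have hcard : ∀ k : ℕ, Fintype.card {l : Nat.Partition n // triM k ≤ l.parts}
      = ∑ l : Nat.Partition n, if triM k ≤ l.parts then 1 else 0 := fun k => by
    rw [Fintype.card_subtype, Finset.card_filter]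
  calc (sigmaMex n : ℤ)
      = ((∑ k ∈ Finset.range (n + 2),
          Fintype.card {l : Nat.Partition n // triM k ≤ l.parts} : ℕ) : ℤ) := by
        congr 1
        rw [sigmaMex]
        simp_rw [hcard]
        rw [Finset.sum_comm]
        exact Finset.sum_congr rfl fun l _ => mex_eq_sum l
    _ = ∑ k ∈ Finset.range (n + 2), partitionsZ ((n : ℤ) - k * (k + 1) / 2) := by
        push_cast
        exact Finset.sum_congr rfl fun k _ => (card_eq_partitionsZ n k).symm
end

section
/- For every integer n ≥ 0, σmex(n) − σmex(n−1) − δ(n) = Σ_{j ≥ 0} M₁(n − j(j+1)/2), where δ(n) = 1 if n is a triangular number m(m+1)/2 and 0 otherwise, and M₁(m) counts partitions of m with no part equal to 1 (M₁(0) = 0). -/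
open scoped Classical

namespace Stmt4Aux

open Finset

/-- The `j`-th triangular number. -/
def T (j : ℕ) : ℕ := j * (j + 1) / 2

lemma two_T (j : ℕ) : 2 * T j = j * (j + 1) := by
  have h : 2 ∣ j * (j + 1) := (Nat.even_mul_succ_self j).two_dvd
  exact Nat.mul_div_cancel' h

lemma le_T (j : ℕ) : j ≤ T j := by
  rcases Nat.eq_zero_or_pos j with h | h
  · simp [h, T]
  · nlinarith [two_T j]

lemma T_strictMono : StrictMono T := by
  apply strictMono_nat_of_lt_succ
  intro j
  nlinarith [two_T j, two_T (j + 1)]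

/-- The multiset `{1, 2, ..., j}`. -/
def ini (j : ℕ) : Multiset ℕ := (Multiset.range j).map (· + 1)

lemma ini_sum (j : ℕ) : (ini j).sum = T j := by
  have h2 : 2 * (ini j).sum = j * (j + 1) := by
    induction j with
    | zero => simp [ini]
    | succ k ih =>
      rw [show ini (k + 1) = (k + 1) ::ₘ ini k from by simp [ini, Multiset.range_succ],
        Multiset.sum_cons]
      calc 2 * (k + 1 + (ini k).sum) = 2 * (k + 1) + 2 * (ini k).sum := by ring
        _ = 2 * (k + 1) + k * (k + 1) := by rw [ih]
        _ = (k + 1) * (k + 1 + 1) := by ring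
  have h3 := two_T j
  exact Nat.eq_of_mul_eq_mul_left (by norm_num) (h2.trans h3.symm)

lemma ini_nodup (j : ℕ) : (ini j).Nodup :=
  Multiset.Nodup.map (fun a b h => by omega) (Multiset.nodup_range j)

lemma mem_ini {j k : ℕ} : k ∈ ini j ↔ 1 ≤ k ∧ k ≤ j := by
  simp only [ini, Multiset.mem_map, Multiset.mem_range]
  constructor
  · rintro ⟨i, hi, rfl⟩; omega
  · rintro ⟨h1, h2⟩; exact ⟨k - 1, by omega, by omega⟩

lemma mexSet_mem {n : ℕ} (l : Nat.Partition n) :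
    l.mex ∈ {k : ℕ | 0 < k ∧ k ∉ l.parts} := by
  rw [Nat.Partition.mex]
  apply Nat.sInf_mem
  refine ⟨n + 1, Nat.succ_pos n, fun h => ?_⟩
  have h2 := Multiset.le_sum_of_mem h
  rw [l.parts_sum] at h2
  omega

lemma mex_pos {n : ℕ} (l : Nat.Partition n) : 0 < l.mex := (mexSet_mem l).1

lemma mex_not_mem {n : ℕ} (l : Nat.Partition n) : l.mex ∉ l.parts := (mexSet_mem l).2

lemma mem_of_lt_mex {n : ℕ} {l : Nat.Partition n} {k : ℕ} (h0 : 0 < k) (h : k < l.mex) :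
    k ∈ l.parts := by
  by_contra hk
  have := Nat.sInf_le (show k ∈ {k : ℕ | 0 < k ∧ k ∉ l.parts} from ⟨h0, hk⟩)
  rw [← Nat.Partition.mex] at this
  omega

lemma mex_le_succ {n : ℕ} (l : Nat.Partition n) : l.mex ≤ n + 1 := by
  rw [Nat.Partition.mex]
  apply Nat.sInf_le
  refine ⟨Nat.succ_pos n, fun h => ?_⟩
  have h2 := Multiset.le_sum_of_mem h
  rw [l.parts_sum] at h2
  omega

lemma ini_le_iff {n : ℕ} {l : Nat.Partition n} {j : ℕ} : ini j ≤ l.parts ↔ j < l.mex := by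
  constructor
  · intro h
    by_contra hj
    push_neg at hj
    have h1 : l.mex ∈ ini j := mem_ini.mpr ⟨mex_pos l, hj⟩
    exact mex_not_mem l (Multiset.mem_of_le h h1)
  · intro h
    rw [Multiset.le_iff_count]
    intro a
    by_cases ha : a ∈ ini j
    · have hc1 : (ini j).count a = 1 := Multiset.count_eq_one_of_mem (ini_nodup j) ha
      obtain ⟨h1, h2⟩ := mem_ini.mp ha
      have hmem : a ∈ l.parts := mem_of_lt_mex (by omega) (by omega)
      rw [hc1]
      exact Multiset.count_pos.mpr hmem
    · simp [Multiset.count_eq_zero_of_notMem ha]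

lemma T_le_of_ini_le {n : ℕ} {l : Nat.Partition n} {j : ℕ} (h : ini j ≤ l.parts) : T j ≤ n := by
  obtain ⟨u, hu⟩ := Multiset.le_iff_exists_add.mp h
  have h2 := l.parts_sum
  rw [hu, Multiset.sum_add, ini_sum] at h2
  omega

/-- Number of partitions of `n` containing each of `1, ..., j`. -/
noncomputable def C (n j : ℕ) : ℕ :=
  (Finset.univ.filter fun l : Nat.Partition n => ini j ≤ l.parts).card

lemma mex_filter {n : ℕ} (l : Nat.Partition n) :
    l.mex = ((Finset.range (n + 2)).filter fun j => ini j ≤ l.parts).card := by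
  have h : ((Finset.range (n + 2)).filter fun j => ini j ≤ l.parts) = Finset.range l.mex := by
    ext j
    simp only [Finset.mem_filter, Finset.mem_range, ini_le_iff]
    have := mex_le_succ l
    omega
  rw [h, Finset.card_range]

lemma sigmaMex_eq (n : ℕ) : sigmaMex n = ∑ j ∈ Finset.range (n + 2), C n j := by
  rw [sigmaMex]
  calc ∑ l : Nat.Partition n, l.mex
      = ∑ l : Nat.Partition n, ∑ j ∈ Finset.range (n + 2),
          if ini j ≤ l.parts then 1 else 0 := by
        refine Finset.sum_congr rfl fun l _ => ?_
        rw [mex_filter l, Finset.card_filter]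
    _ = ∑ j ∈ Finset.range (n + 2), ∑ l : Nat.Partition n,
          if ini j ≤ l.parts then 1 else 0 := Finset.sum_comm
    _ = ∑ j ∈ Finset.range (n + 2), C n j := by
        refine Finset.sum_congr rfl fun j _ => ?_
        rw [C, Finset.card_filter]

/-- Removing the parts `1, ..., j`. -/
noncomputable def equivPartition {n j : ℕ} (h : T j ≤ n) :
    {l : Nat.Partition n // ini j ≤ l.parts} ≃ Nat.Partition (n - T j) where
  toFun := fun x =>
    { parts := x.1.parts - ini j
      parts_pos := fun hi => x.1.parts_pos (Multiset.mem_of_le (tsub_le_self) hi)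
      parts_sum := by
        have h1 : x.1.parts - ini j + ini j = x.1.parts := tsub_add_cancel_of_le x.2
        have h2 := congrArg Multiset.sum h1
        rw [Multiset.sum_add, ini_sum, x.1.parts_sum] at h2
        omega }
  invFun := fun m =>
    ⟨{ parts := m.parts + ini j
       parts_pos := fun hi => by
         rcases Multiset.mem_add.mp hi with h' | h'
         · exact m.parts_pos h'
         · have := (mem_ini.mp h').1; omega
       parts_sum := by rw [Multiset.sum_add, ini_sum, m.parts_sum]; omega },
     le_add_self⟩
  left_inv := fun x => by
    apply Subtype.ext
    apply Nat.Partition.ext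
    exact tsub_add_cancel_of_le x.2
  right_inv := fun m => by
    apply Nat.Partition.ext
    exact add_tsub_cancel_right _ _

lemma C_eq {n j : ℕ} (h : T j ≤ n) : C n j = Fintype.card (Nat.Partition (n - T j)) := by
  rw [C, ← Fintype.card_subtype]
  exact Fintype.card_congr (equivPartition h)

lemma C_eq_zero {n j : ℕ} (h : n < T j) : C n j = 0 := by
  rw [C, Finset.card_eq_zero, Finset.filter_eq_empty_iff]
  intro l _ hl
  exact absurd (T_le_of_ini_le hl) (by omega)

lemma parts_eq_zero (l : Nat.Partition 0) : l.parts = 0 := by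
  by_contra h
  obtain ⟨a, ha⟩ := Multiset.exists_mem_of_ne_zero h
  have h1 := l.parts_pos ha
  have h2 := Multiset.le_sum_of_mem ha
  rw [l.parts_sum] at h2
  omega

lemma card_partition_zero : Fintype.card (Nat.Partition 0) = 1 := by
  rw [Fintype.card_eq_one_iff]
  refine ⟨⟨0, by simp, by simp⟩, fun l => ?_⟩
  exact Nat.Partition.ext (parts_eq_zero l)

/-- Number of partitions of `m` with no part equal to `1`. -/
noncomputable def p1 (m : ℕ) : ℕ :=
  (Finset.univ.filter fun l : Nat.Partition m => 1 ∉ l.parts).card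

lemma ini_one : ini 1 = {1} := rfl

lemma card_split (m : ℕ) : Fintype.card (Nat.Partition m) = C m 1 + p1 m := by
  rw [C, p1, Fintype.card]
  rw [← Finset.card_filter_add_card_filter_not
    (s := Finset.univ) (p := fun l : Nat.Partition m => ini 1 ≤ l.parts)]
  congr 1
  refine congrArg Finset.card ?_
  apply Finset.filter_congr
  intro l _
  simp [ini_one, Multiset.singleton_le]

lemma mex_eq_one_iff {m : ℕ} (l : Nat.Partition m) : l.mex = 1 ↔ 1 ∉ l.parts := by
  constructor
  · intro h
    have := mex_not_mem l
    rwa [h] at this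
  · intro h
    have h1 : l.mex ≤ 1 := by
      rw [Nat.Partition.mex]
      exact Nat.sInf_le ⟨one_pos, h⟩
    have h2 := mex_pos l
    omega

lemma Mfun_one_zero : Mfun 1 0 = 0 := by
  rw [Mfun]
  haveI : IsEmpty {l : Nat.Partition 0 // l.mex = 1 ∧
      (l.parts.filter fun t => t < 1).card < (l.parts.filter fun t => 1 < t).card} := by
    constructor
    rintro ⟨l, -, hl⟩
    rw [parts_eq_zero l] at hl
    simp at hl
  exact Nat.card_of_isEmpty

lemma Mfun_one {m : ℕ} (hm : 0 < m) : Mfun 1 m = p1 m := by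
  rw [Mfun, Nat.card_eq_fintype_card, Fintype.card_subtype, p1]
  congr 1
  apply Finset.filter_congr
  intro l _
  constructor
  · rintro ⟨h, -⟩
    exact (mex_eq_one_iff l).mp h
  · intro h
    refine ⟨(mex_eq_one_iff l).mpr h, ?_⟩
    have h0 : (l.parts.filter fun t => t < 1) = 0 := by
      rw [Multiset.filter_eq_nil]
      intro t ht
      have := l.parts_pos ht
      omega
    have hne : l.parts ≠ 0 := by
      intro h0'
      have := l.parts_sum
      rw [h0'] at this
      simp at this
      omega
    obtain ⟨a, ha⟩ := Multiset.exists_mem_of_ne_zero hne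
    have hane : a ≠ 1 := fun e => h (e ▸ ha)
    have hpos := l.parts_pos ha
    have ha1 : 1 < a := by omega
    have hmem : a ∈ l.parts.filter fun t => 1 < t := Multiset.mem_filter.mpr ⟨ha, ha1⟩
    rw [h0]
    simpa using Multiset.card_pos_iff_exists_mem.mpr ⟨a, hmem⟩

lemma cast_T (j : ℕ) : ((j : ℤ) * ((j : ℤ) + 1)) / 2 = (T j : ℤ) := by
  have h2 : ((j : ℤ) * ((j : ℤ) + 1)) = 2 * (T j : ℤ) := by exact_mod_cast (two_T j).symm
  rw [h2]
  exact Int.mul_ediv_cancel_left _ (by norm_num)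

lemma deltaTri_eq (n : ℕ) :
    deltaTri (n : ℤ) = ∑ j ∈ Finset.range (n + 2), (if T j = n then (1 : ℤ) else 0) := by
  rw [deltaTri]
  by_cases h : ∃ m : ℤ, 2 * (n : ℤ) = m * (m + 1)
  · rw [if_pos h]
    obtain ⟨m, hm⟩ := h
    obtain ⟨j, hj⟩ : ∃ j : ℕ, 2 * n = j * (j + 1) := by
      rcases le_or_gt 0 m with h0 | h0
      · lift m to ℕ using h0
        exact ⟨m, by exact_mod_cast hm⟩
      · have h1 : (0 : ℤ) ≤ -m - 1 := by omega
        refine ⟨(-m - 1).toNat, ?_⟩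
        have ht : ((-m - 1).toNat : ℤ) = -m - 1 := Int.toNat_of_nonneg h1
        have h2 : 2 * (n : ℤ) = (-m - 1) * ((-m - 1) + 1) := by rw [hm]; ring
        rw [← ht] at h2
        exact_mod_cast h2
    have hTj : T j = n := by
      have h2 := two_T j
      rw [← h2] at hj
      omega
    have hjlt : j < n + 2 := by have := le_T j; omega
    rw [Finset.sum_eq_single j]
    · rw [if_pos hTj]
    · intro k _ hkj
      rw [if_neg]
      intro hTk
      exact hkj (T_strictMono.injective (hTk.trans hTj.symm))
    · intro hj'
      exact absurd (Finset.mem_range.mpr hjlt) hj'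
  · rw [if_neg h]
    symm
    apply Finset.sum_eq_zero
    intro j _
    rw [if_neg]
    intro hTj
    refine h ⟨(j : ℤ), ?_⟩
    have h2 := two_T j
    rw [hTj] at h2
    exact_mod_cast h2

lemma key (n j : ℕ) :
    (C n j : ℤ) - (if n = 0 then 0 else (C (n - 1) j : ℤ)) - (if T j = n then 1 else 0)
      = MfunZ 1 ((n : ℤ) - (T j : ℤ)) := by
  rcases lt_trichotomy (T j) n with h | h | h
  · have hn : n ≠ 0 := by omega
    rw [if_neg hn, if_neg (by omega : ¬ T j = n)]
    rw [C_eq (le_of_lt h), C_eq (show T j ≤ n - 1 by omega)]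
    rw [MfunZ, if_pos (by omega : (0:ℤ) ≤ (n : ℤ) - (T j : ℤ))]
    have ht : ((n : ℤ) - (T j : ℤ)).toNat = n - T j := by omega
    rw [ht]
    have hm1 : 0 < n - T j := by omega
    have hrec : Fintype.card (Nat.Partition (n - T j)) =
        Fintype.card (Nat.Partition (n - T j - 1)) + p1 (n - T j) := by
      have hc := card_split (n - T j)
      have hT1 : T 1 = 1 := rfl
      rw [C_eq (by rw [hT1]; omega), hT1] at hc
      exact hc
    have hM := Mfun_one hm1
    have hidx : n - 1 - T j = n - T j - 1 := by omega
    rw [hidx, hM]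
    omega
  · rw [if_pos h]
    rw [C_eq (le_of_eq h), show n - T j = 0 by omega, card_partition_zero]
    have h2 : (if n = 0 then (0 : ℤ) else (C (n - 1) j : ℤ)) = 0 := by
      split_ifs with hn
      · rfl
      · rw [C_eq_zero (by omega), Nat.cast_zero]
    rw [h2, MfunZ, if_pos (by omega : (0:ℤ) ≤ (n : ℤ) - (T j : ℤ)),
      show ((n : ℤ) - (T j : ℤ)).toNat = 0 by omega, Mfun_one_zero]
    norm_num
  · rw [C_eq_zero h, if_neg (by omega : ¬ T j = n)]
    have h2 : (if n = 0 then (0 : ℤ) else (C (n - 1) j : ℤ)) = 0 := by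
      split_ifs with hn
      · rfl
      · rw [C_eq_zero (by omega), Nat.cast_zero]
    rw [h2, MfunZ, if_neg (by omega : ¬ (0:ℤ) ≤ (n : ℤ) - (T j : ℤ))]
    norm_num

end Stmt4Aux

open Stmt4Aux in
theorem stmt4 (n : ℕ) :
    (sigmaMex n : ℤ) - sigmaMexZ ((n : ℤ) - 1) - deltaTri n =
      ∑' j : ℕ, MfunZ 1 ((n : ℤ) - j * (j + 1) / 2) := by
  simp only [cast_T]
  have h0 : ∀ j ∉ Finset.range (n + 2), MfunZ 1 ((n : ℤ) - (T j : ℤ)) = 0 := by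
    intro j hj
    rw [Finset.mem_range, not_lt] at hj
    have h1 := le_T j
    rw [MfunZ, if_neg (by omega)]
  rw [tsum_eq_sum h0]
  have hL1 : (sigmaMex n : ℤ) = ∑ j ∈ Finset.range (n + 2), (C n j : ℤ) := by
    rw [sigmaMex_eq n, Nat.cast_sum]
  have hL2 : sigmaMexZ ((n : ℤ) - 1) =
      if n = 0 then 0 else ∑ j ∈ Finset.range (n + 2), (C (n - 1) j : ℤ) := by
    rcases Nat.eq_zero_or_pos n with h | h
    · subst h
      rw [sigmaMexZ, if_neg (by norm_num)]
      simp
    · rw [if_neg (by omega), sigmaMexZ, if_pos (by omega : (0:ℤ) ≤ (n : ℤ) - 1)]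
      have ht : ((n : ℤ) - 1).toNat = n - 1 := by omega
      rw [ht, sigmaMex_eq (n - 1), Nat.cast_sum]
      have hr : n - 1 + 2 = n + 1 := by omega
      rw [hr]
      rw [show n + 2 = (n + 1) + 1 by omega,
        Finset.sum_range_succ (f := fun j => (C (n - 1) j : ℤ)) (n := n + 1)]
      have hz : C (n - 1) (n + 1) = 0 := C_eq_zero (by have := le_T (n + 1); omega)
      rw [hz]
      simp
  rw [hL1, hL2, deltaTri_eq n]
  calc (∑ j ∈ Finset.range (n + 2), (C n j : ℤ)) -
        (if n = 0 then 0 else ∑ j ∈ Finset.range (n + 2), (C (n - 1) j : ℤ)) -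
        ∑ j ∈ Finset.range (n + 2), (if T j = n then (1 : ℤ) else 0)
      = ∑ j ∈ Finset.range (n + 2), ((C n j : ℤ) -
          (if n = 0 then 0 else (C (n - 1) j : ℤ)) - (if T j = n then 1 else 0)) := by
        rw [Finset.sum_sub_distrib, Finset.sum_sub_distrib]
        congr 2
        split_ifs with hn
        · simp
        · rfl
    _ = ∑ j ∈ Finset.range (n + 2), MfunZ 1 ((n : ℤ) - (T j : ℤ)) :=
        Finset.sum_congr rfl fun j _ => key n j
end

section
/- For every integer n ≥ 0, Σ_{j ≥ 0} D₁((n − j(j+1)/2)/2) = D₂*(n), where D₁ is applied only when its argument is a non-negative integer (else the term is 0). -/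
open scoped Classical

namespace Stmt11Aux

def triA (j : ℕ) : ℕ := j * (j + 1) / 2

lemma two_triA (j : ℕ) : 2 * triA j = j * (j + 1) :=
  Nat.mul_div_cancel' (even_iff_two_dvd.mp (Nat.even_mul_succ_self j))

lemma le_triA (j : ℕ) : j ≤ triA j := by
  have h := two_triA j
  nlinarith

lemma sum_range_map (j : ℕ) : ((Multiset.range j).map (· + 1)).sum = triA j := by
  induction j with
  | zero => simp [triA]
  | succ j ih =>
    rw [Multiset.range_succ, Multiset.map_cons, Multiset.sum_cons, ih]
    have h1 := two_triA j
    have h2 := two_triA (j + 1)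
    have h3 : (j + 1) * (j + 2) = j * (j + 1) + 2 * (j + 1) := by ring
    have : 2 * (j + 1 + triA j) = 2 * triA (j + 1) := by
      rw [h2, h3, ← h1]; ring
    omega

lemma triA_castZ (j : ℕ) : (j : ℤ) * ((j : ℤ) + 1) / 2 = (triA j : ℤ) := by
  have h : ((j * (j + 1) : ℕ) : ℤ) = (j : ℤ) * ((j : ℤ) + 1) := by push_cast; ring
  rw [← h, ← two_triA j]
  push_cast
  rw [Int.mul_ediv_cancel_left _ (by norm_num)]

def Fib (n j : ℕ) : Type :=
  {p : Nat.Partition ((n - triA j) / 2) // p.parts.Nodup ∧ triA j ≤ n ∧ 2 ∣ (n - triA j)}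

instance (n j : ℕ) : Finite (Fib n j) := Subtype.finite

def emb (j : ℕ) (q : Multiset ℕ) : Multiset (ℕ × Fin 2) :=
  (Multiset.range j).map (fun a => (a + 1, (0 : Fin 2))) +
    q.map (fun a => (2 * a, (1 : Fin 2)))

lemma emb_filter0 (j : ℕ) (q : Multiset ℕ) :
    (emb j q).filter (fun p => p.2 = (0 : Fin 2)) =
      (Multiset.range j).map (fun a => (a + 1, (0 : Fin 2))) := by
  unfold emb
  rw [Multiset.filter_add, Multiset.filter_map, Multiset.filter_map]
  have h1 : Multiset.filter ((fun p : ℕ × Fin 2 => p.2 = 0) ∘ fun a : ℕ => (a + 1, (0 : Fin 2)))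
      (Multiset.range j) = Multiset.range j := Multiset.filter_eq_self.2 (by intro a _; simp)
  have h2 : Multiset.filter ((fun p : ℕ × Fin 2 => p.2 = 0) ∘ fun a : ℕ => (2 * a, (1 : Fin 2)))
      q = 0 := Multiset.filter_eq_nil.2 (by intro a _; simp)
  rw [h1, h2]
  simp

lemma emb_filter1 (j : ℕ) (q : Multiset ℕ) :
    (emb j q).filter (fun p => p.2 = (1 : Fin 2)) = q.map (fun a => (2 * a, (1 : Fin 2))) := by
  unfold emb
  rw [Multiset.filter_add, Multiset.filter_map, Multiset.filter_map]
  have h1 : Multiset.filter ((fun p : ℕ × Fin 2 => p.2 = 1) ∘ fun a : ℕ => (a + 1, (0 : Fin 2)))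
      (Multiset.range j) = 0 := Multiset.filter_eq_nil.2 (by intro a _; simp)
  have h2 : Multiset.filter ((fun p : ℕ × Fin 2 => p.2 = 1) ∘ fun a : ℕ => (2 * a, (1 : Fin 2)))
      q = q := Multiset.filter_eq_self.2 (by intro a _; simp)
  rw [h1, h2]
  simp

lemma emb_map_fst (j : ℕ) (q : Multiset ℕ) :
    (emb j q).map Prod.fst = (Multiset.range j).map (· + 1) + q.map (fun a => 2 * a) := by
  unfold emb
  rw [Multiset.map_add, Multiset.map_map, Multiset.map_map]
  rfl

lemma sum_map_two_mul (q : Multiset ℕ) : (q.map (fun a => 2 * a)).sum = 2 * q.sum := by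
  induction q using Multiset.induction with
  | empty => simp
  | cons a s ih => simp [ih, mul_add]

lemma eq_map_fst (s : Multiset (ℕ × Fin 2)) (c : Fin 2) (h : ∀ x ∈ s, x.2 = c) :
    s = (s.map Prod.fst).map (fun a => (a, c)) := by
  rw [Multiset.map_map]
  conv_lhs => rw [← Multiset.map_id s]
  exact Multiset.map_congr rfl (fun x hx => by
    simp [Function.comp, Prod.ext_iff, h x hx])

/-- The predicate from `D2star`. -/
def STP (n : ℕ) (m : Multiset (ℕ × Fin 2)) : Prop :=
  IsColoredPartition n m ∧ m.Nodup ∧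
    (∃ j : ℕ, (m.filter fun p => p.2 = 0).map Prod.fst = (Multiset.range j).map (· + 1)) ∧
    ∀ p ∈ m, p.2 = 1 → Even p.1

lemma stp_emb (n j : ℕ) (hj : triA j ≤ n) (hdvd : 2 ∣ n - triA j)
    (q : Multiset ℕ) (hq : q.Nodup) (hpos : ∀ a ∈ q, 0 < a)
    (hsum : q.sum = (n - triA j) / 2) : STP n (emb j q) := by
  refine ⟨⟨?_, ?_⟩, ?_, ⟨j, ?_⟩, ?_⟩
  · intro p hp
    rcases Multiset.mem_add.1 hp with h | h
    · obtain ⟨a, _, rfl⟩ := Multiset.mem_map.1 h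
      simp
    · obtain ⟨a, ha, rfl⟩ := Multiset.mem_map.1 h
      have := hpos a ha
      simp; omega
  · rw [emb_map_fst, Multiset.sum_add, sum_range_map, sum_map_two_mul, hsum,
      Nat.mul_div_cancel' hdvd]
    omega
  · rw [emb, Multiset.nodup_add]
    refine ⟨?_, ?_, ?_⟩
    · exact (Multiset.nodup_range j).map (fun a b h => by
        simpa using congrArg Prod.fst h)
    · exact hq.map (fun a b h => by
        have := congrArg Prod.fst h; simp at this; omega)
    · rw [Multiset.disjoint_left]
      intro x hx hx'
      obtain ⟨a, _, rfl⟩ := Multiset.mem_map.1 hx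
      obtain ⟨b, _, hb⟩ := Multiset.mem_map.1 hx'
      have := congrArg Prod.snd hb
      simp at this
  · rw [emb_filter0, Multiset.map_map]
    rfl
  · intro p hp h1
    rcases Multiset.mem_add.1 hp with h | h
    · obtain ⟨a, _, rfl⟩ := Multiset.mem_map.1 h
      simp at h1
    · obtain ⟨a, _, rfl⟩ := Multiset.mem_map.1 h
      exact ⟨a, by ring⟩

noncomputable def fwd (n : ℕ) (x : Σ j : Fin (n + 1), Fib n j) :
    {m : Multiset (ℕ × Fin 2) // STP n m} :=
  ⟨emb x.1 x.2.1.parts,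
    stp_emb n x.1 x.2.2.2.1 x.2.2.2.2 x.2.1.parts x.2.2.1
      (fun a ha => x.2.1.parts_pos ha) x.2.1.parts_sum⟩

lemma fwd_inj (n : ℕ) : Function.Injective (fwd n) := by
  rintro ⟨⟨j, hj⟩, p, hp⟩ ⟨⟨j', hj'⟩, p', hp'⟩ h
  have h' : emb j p.parts = emb j' p'.parts := congrArg Subtype.val h
  have hj0 : j = j' := by
    have := congrArg (fun m => Multiset.card
      (Multiset.filter (fun p : ℕ × Fin 2 => p.2 = (0 : Fin 2)) m)) h'
    simpa [emb_filter0] using this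
  subst hj0
  have hq : p.parts = p'.parts := by
    have := congrArg (fun m =>
      (Multiset.filter (fun p : ℕ × Fin 2 => p.2 = (1 : Fin 2)) m).map Prod.fst) h'
    simp only [emb_filter1, Multiset.map_map] at this
    have this2 : p.parts.map (fun a => 2 * a) = p'.parts.map (fun a => 2 * a) := by
      simpa [Function.comp] using this
    exact Multiset.map_injective (fun a b hab => by omega) this2
  have : p = p' := Nat.Partition.ext hq
  subst this
  rfl

lemma fwd_surj (n : ℕ) : Function.Surjective (fwd n) := by
  rintro ⟨m, ⟨hpos, hsum⟩, hnd, ⟨j, hj⟩, hev⟩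
  have hfin2 : ∀ c : Fin 2, (¬ c = 0) ↔ c = 1 := by decide
  have hsplit : m = m.filter (fun p : ℕ × Fin 2 => p.2 = (0 : Fin 2)) +
      m.filter (fun p : ℕ × Fin 2 => p.2 = (1 : Fin 2)) := by
    conv_lhs => rw [← Multiset.filter_add_not (fun p : ℕ × Fin 2 => p.2 = (0 : Fin 2)) m]
    congr 1
    exact Multiset.filter_congr (fun x _ => hfin2 x.2)
  have h0 : m.filter (fun p : ℕ × Fin 2 => p.2 = (0 : Fin 2)) =
      (Multiset.range j).map (fun a => (a + 1, (0 : Fin 2))) := by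
    conv_lhs => rw [eq_map_fst (m.filter (fun p : ℕ × Fin 2 => p.2 = (0 : Fin 2))) 0
      (fun x hx => (Multiset.mem_filter.1 hx).2)]
    rw [hj, Multiset.map_map]
    rfl
  have h1 : m.filter (fun p : ℕ × Fin 2 => p.2 = (1 : Fin 2)) =
      ((m.filter (fun p : ℕ × Fin 2 => p.2 = (1 : Fin 2))).map Prod.fst).map
        (fun a => (a, (1 : Fin 2))) :=
    eq_map_fst _ 1 (fun x hx => (Multiset.mem_filter.1 hx).2)
  set q1 := (m.filter (fun p : ℕ × Fin 2 => p.2 = (1 : Fin 2))).map Prod.fst with hq1def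
  have hevq : ∀ a ∈ q1, 2 ∣ a := by
    intro a ha
    obtain ⟨x, hx, rfl⟩ := Multiset.mem_map.1 ha
    have hx' := Multiset.mem_filter.1 hx
    exact even_iff_two_dvd.mp (hev x hx'.1 hx'.2)
  have hposq : ∀ a ∈ q1, 0 < a := by
    intro a ha
    obtain ⟨x, hx, rfl⟩ := Multiset.mem_map.1 ha
    exact hpos x (Multiset.mem_filter.1 hx).1
  set q := q1.map (· / 2) with hqdef
  have hq1eq : q1 = q.map (fun a => 2 * a) := by
    rw [hqdef, Multiset.map_map]
    conv_lhs => rw [← Multiset.map_id q1]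
    refine Multiset.map_congr rfl (fun a ha => ?_)
    have := hevq a ha
    show a = 2 * (a / 2)
    omega
  have hsum2 : triA j + 2 * q.sum = n := by
    have hs := hsum
    conv_lhs at hs => rw [hsplit]
    rw [Multiset.map_add, Multiset.sum_add, hj, sum_range_map, ← hq1def, hq1eq,
      sum_map_two_mul] at hs
    omega
  have hndq1 : q1.Nodup := by
    have hn : (m.filter (fun p : ℕ × Fin 2 => p.2 = (1 : Fin 2))).Nodup := hnd.filter _
    rw [h1] at hn
    exact hn.of_map _
  have hndq : q.Nodup := by
    have hn := hndq1
    rw [hq1eq] at hn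
    exact hn.of_map _
  have hposq2 : ∀ a ∈ q, 0 < a := by
    intro a ha
    obtain ⟨b, hb, rfl⟩ := Multiset.mem_map.1 ha
    have h2 := hposq b hb
    have h3 := hevq b hb
    show 0 < b / 2
    omega
  have hle : triA j ≤ n := by omega
  have hdvd : 2 ∣ n - triA j := by omega
  have hqsum : q.sum = (n - triA j) / 2 := by omega
  have hjlt : j < n + 1 := by have := le_triA j; omega
  refine ⟨⟨⟨j, hjlt⟩, ⟨⟨q, fun {a} ha => hposq2 a ha, hqsum⟩, hndq, hle, hdvd⟩⟩, ?_⟩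
  apply Subtype.ext
  show emb j q = m
  conv_rhs => rw [hsplit]
  rw [h0, emb]
  congr 1
  rw [h1, hq1eq]
  conv_rhs => rw [Multiset.map_map]
  rfl

lemma card_fib (n j : ℕ) :
    D1half ((n : ℤ) - (j : ℤ) * ((j : ℤ) + 1) / 2) = (Nat.card (Fib n j) : ℤ) := by
  rw [triA_castZ]
  by_cases h : triA j ≤ n ∧ 2 ∣ (n - triA j)
  · have hx0 : (0 : ℤ) ≤ (n : ℤ) - (triA j : ℤ) := by omega
    have hdvd : (2 : ℤ) ∣ ((n : ℤ) - (triA j : ℤ)) := by omega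
    unfold D1half
    rw [if_pos ⟨hx0, hdvd⟩]
    have hk : (((n : ℤ) - (triA j : ℤ)) / 2).toNat = (n - triA j) / 2 := by omega
    rw [hk]
    congr 1
    unfold D1
    have e : Fib n j ≃ {p : Nat.Partition ((n - triA j) / 2) // p ∈
        Nat.Partition.distincts ((n - triA j) / 2)} :=
      Equiv.subtypeEquivRight (fun p => by
        rw [Nat.Partition.distincts, Finset.mem_filter]
        constructor
        · exact fun hp => ⟨Finset.mem_univ p, hp.1⟩
        · exact fun hp => ⟨hp.2, h.1, h.2⟩)
    rw [Nat.card_congr e, Nat.card_eq_finsetCard]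
  · haveI he : IsEmpty (Fib n j) := ⟨fun x => h ⟨x.2.2.1, x.2.2.2⟩⟩
    rw [Nat.card_of_isEmpty]
    unfold D1half
    have hnc : ¬((0 : ℤ) ≤ (n : ℤ) - (triA j : ℤ) ∧ (2 : ℤ) ∣ ((n : ℤ) - (triA j : ℤ))) := by
      rintro ⟨h1, h2⟩
      exact h ⟨by omega, by omega⟩
    rw [if_neg hnc]
    simp

lemma card_sigma_eq (n : ℕ) :
    (D2star n : ℤ) = ∑ j ∈ Finset.range (n + 1), (Nat.card (Fib n j) : ℤ) := by
  have hb : Function.Bijective (fwd n) := ⟨fwd_inj n, fwd_surj n⟩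
  have h1 : Nat.card (Σ j : Fin (n + 1), Fib n j) =
      Nat.card {m : Multiset (ℕ × Fin 2) // STP n m} :=
    Nat.card_eq_of_bijective _ hb
  have h2 : D2star n = Nat.card {m : Multiset (ℕ × Fin 2) // STP n m} := rfl
  haveI : ∀ j : Fin (n + 1), Fintype (Fib n ↑j) := fun j => Fintype.ofFinite _
  rw [h2, ← h1, Nat.card_eq_fintype_card, Fintype.card_sigma]
  push_cast
  rw [← Fin.sum_univ_eq_sum_range (fun j => (Nat.card (Fib n j) : ℤ)) (n + 1)]
  exact Finset.sum_congr rfl fun i _ => by rw [Nat.card_eq_fintype_card]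

end Stmt11Aux

theorem stmt11 (n : ℕ) :
    ∑' j : ℕ, D1half ((n : ℤ) - j * (j + 1) / 2) = (D2star n : ℤ) := by
  have hzero : ∀ j ∉ Finset.range (n + 1), D1half ((n : ℤ) - j * (j + 1) / 2) = 0 := by
    intro j hjm
    rw [Finset.mem_range, not_lt] at hjm
    have h1 := Stmt11Aux.le_triA j
    rw [Stmt11Aux.triA_castZ]
    unfold D1half
    have hnc : ¬((0 : ℤ) ≤ (n : ℤ) - (Stmt11Aux.triA j : ℤ) ∧
        (2 : ℤ) ∣ ((n : ℤ) - (Stmt11Aux.triA j : ℤ))) := by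
      rintro ⟨hx, -⟩
      omega
    rw [if_neg hnc]
  rw [tsum_eq_sum hzero, Stmt11Aux.card_sigma_eq n]
  exact Finset.sum_congr rfl fun j _ => Stmt11Aux.card_fib n j
end

section
/- For every integer n ≥ 0, σmex(n) = Σ_{j=0}^{n} pod(j) · D₂*(n − j), where pod(m) is the number of partitions of m in which odd parts are not repeated. -/
open scoped Classical

open PowerSeries

namespace Theorems100

noncomputable section

variable {α : Type*}

open Finset

open scoped Classical

/-- The partial product for the generating function for odd partitions.
TODO: As `m` tends to infinity, this converges (in the `X`-adic topology).

If `m` is sufficiently large, the `i`th coefficient gives the number of odd partitions of the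
natural number `i`: proved in `oddGF_prop`.
It is stated for an arbitrary field `α`, though it usually suffices to use `ℚ` or `ℝ`.
-/
def partialOddGF (m : ℕ) [Field α] :=
  ∏ i ∈ range m, (1 - (X : PowerSeries α) ^ (2 * i + 1))⁻¹

/-- The partial product for the generating function for distinct partitions.
TODO: As `m` tends to infinity, this converges (in the `X`-adic topology).

If `m` is sufficiently large, the `i`th coefficient gives the number of distinct partitions of the
natural number `i`: proved in `distinctGF_prop`.
It is stated for an arbitrary commutative semiring `α`, though it usually suffices to use `ℕ`, `ℚ`
or `ℝ`.
-/
def partialDistinctGF (m : ℕ) [CommSemiring α] :=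
  ∏ i ∈ range m, (1 + (X : PowerSeries α) ^ (i + 1))

open Finset.HasAntidiagonal

universe u
variable {ι : Type u}

/-- A convenience constructor for the power series whose coefficients indicate a subset. -/
def indicatorSeries (α : Type*) [Semiring α] (s : Set ℕ) : PowerSeries α :=
  PowerSeries.mk fun n => if n ∈ s then 1 else 0

theorem coeff_indicator (s : Set ℕ) [Semiring α] (n : ℕ) :
    coeff (R := α) n (indicatorSeries _ s) = if n ∈ s then 1 else 0 :=
  coeff_mk _ _

theorem coeff_indicator_pos (s : Set ℕ) [Semiring α] (n : ℕ) (h : n ∈ s) :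
    coeff (R := α) n (indicatorSeries _ s) = 1 := by rw [coeff_indicator, if_pos h]

theorem coeff_indicator_neg (s : Set ℕ) [Semiring α] (n : ℕ) (h : n ∉ s) :
    coeff (R := α) n (indicatorSeries _ s) = 0 := by rw [coeff_indicator, if_neg h]

theorem constantCoeff_indicator (s : Set ℕ) [Semiring α] :
    constantCoeff (R := α) (indicatorSeries _ s) = if 0 ∈ s then 1 else 0 :=
  rfl

theorem two_series (i : ℕ) [Semiring α] :
    1 + (X : PowerSeries α) ^ i.succ = indicatorSeries α {0, i.succ} := by
  ext n
  simp only [coeff_indicator, coeff_one, coeff_X_pow, Set.mem_insert_iff, Set.mem_singleton_iff,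
    map_add]
  cases' n with d
  · simp [(Nat.succ_ne_zero i).symm]
  · simp [Nat.succ_ne_zero d]

theorem num_series' [Field α] (i : ℕ) :
    (1 - (X : PowerSeries α) ^ (i + 1))⁻¹ = indicatorSeries α {k | i + 1 ∣ k} := by
  rw [PowerSeries.inv_eq_iff_mul_eq_one]
  · ext n
    cases n with
    | zero => simp [mul_sub, zero_pow, constantCoeff_indicator]
    | succ n =>
      simp only [coeff_one, if_false, mul_sub, mul_one, coeff_indicator,
        LinearMap.map_sub, reduceCtorEq]
      simp_rw [coeff_mul, coeff_X_pow, coeff_indicator, @boole_mul _ _ _ _]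
      erw [@sum_ite _ _ _ _ _ (fun _ => Classical.propDecidable _), sum_ite]
      simp_rw [@filter_filter _ _ _ _ _, sum_const_zero, add_zero, sum_const, nsmul_eq_mul, mul_one,
        sub_eq_iff_eq_add, zero_add]
      symm
      split_ifs with h
      · suffices #{a ∈ antidiagonal (n + 1) | i + 1 ∣ a.fst ∧ a.snd = i + 1} = 1 by
          simp only [Set.mem_setOf_eq]; convert congr_arg ((↑) : ℕ → α) this; norm_cast
        rw [card_eq_one]
        cases' h with p hp
        refine ⟨((i + 1) * (p - 1), i + 1), ?_⟩
        ext ⟨a₁, a₂⟩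
        simp only [mem_filter, Prod.mk_inj, Finset.HasAntidiagonal.mem_antidiagonal, mem_singleton]
        constructor
        · rintro ⟨a_left, ⟨a, rfl⟩, rfl⟩
          refine ⟨?_, rfl⟩
          rw [Nat.mul_sub_left_distrib, ← hp, ← a_left, mul_one, Nat.add_sub_cancel]
        · rintro ⟨rfl, rfl⟩
          match p with
          | 0 => rw [mul_zero] at hp; cases hp
          | p + 1 => rw [hp]; simp [mul_add]
      · suffices #{a ∈ antidiagonal (n + 1) | i + 1 ∣ a.fst ∧ a.snd = i + 1} = 0 by
          simp only [Set.mem_setOf_eq]; convert congr_arg ((↑) : ℕ → α) this; norm_cast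
        rw [card_eq_zero]
        apply eq_empty_of_forall_notMem
        simp only [Prod.forall, mem_filter, not_and, Finset.HasAntidiagonal.mem_antidiagonal]
        rintro _ h₁ h₂ ⟨a, rfl⟩ rfl
        apply h
        simp [← h₂]
  · simp [zero_pow]

def mkOdd : ℕ ↪ ℕ :=
  ⟨fun i => 2 * i + 1, fun x y h => by linarith⟩

-- The main workhorse of the partition theorem proof.
theorem partialGF_prop (α : Type*) [CommSemiring α] (n : ℕ) (s : Finset ℕ) (hs : ∀ i ∈ s, 0 < i)
    (c : ℕ → Set ℕ) (hc : ∀ i, i ∉ s → 0 ∈ c i) :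
    #{p : n.Partition | (∀ j, p.parts.count j ∈ c j) ∧ ∀ j ∈ p.parts, j ∈ s} =
      coeff (R := α) n (∏ i ∈ s, indicatorSeries α ((· * i) '' c i)) := by
  simp_rw [coeff_prod, coeff_indicator, prod_boole, sum_boole]
  apply congr_arg
  simp only [mem_univ, forall_true_left, not_and, not_forall, exists_prop,
    Set.mem_image, not_exists]
  set φ : (a : Nat.Partition n) →
    a ∈ filter (fun p ↦ (∀ (j : ℕ), Multiset.count j p.parts ∈ c j) ∧ ∀ j ∈ p.parts, j ∈ s) univ →
    ℕ →₀ ℕ := fun p _ => {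
      toFun := fun i => Multiset.count i p.parts • i
      support := Finset.filter (fun i => i ≠ 0) p.parts.toFinset
      mem_support_toFun := fun a => by
        simp only [smul_eq_mul, ne_eq, mul_eq_zero, Multiset.count_eq_zero]
        rw [not_or, not_not]
        simp only [Multiset.mem_toFinset, not_not, mem_filter] }
  refine Finset.card_bij φ ?_ ?_ ?_
  · intro a ha
    simp only [φ, not_forall, not_exists, not_and, exists_prop, mem_filter]
    rw [mem_finsuppAntidiag]
    dsimp only [ne_eq, smul_eq_mul, id_eq, eq_mpr_eq_cast, le_eq_subset, Finsupp.coe_mk]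
    simp only [mem_univ, forall_true_left, not_and, not_forall, exists_prop,
      mem_filter, true_and] at ha
    refine ⟨⟨?_, fun i ↦ ?_⟩, fun i _ ↦ ⟨a.parts.count i, ha.1 i, rfl⟩⟩
    · conv_rhs => simp [← a.parts_sum]
      rw [sum_multiset_count_of_subset _ s]
      · simp only [smul_eq_mul]
      · intro i
        simp only [Multiset.mem_toFinset, not_not, mem_filter]
        apply ha.2
    · simp only [ne_eq, Multiset.mem_toFinset, not_not, mem_filter, and_imp]
      exact fun hi _ ↦ ha.2 i hi
  · intro p₁ hp₁ p₂ hp₂ h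
    apply Nat.Partition.ext
    simp only [true_and, mem_univ, mem_filter] at hp₁ hp₂
    ext i
    simp only [φ, ne_eq, Multiset.mem_toFinset, not_not, smul_eq_mul, Finsupp.mk.injEq] at h
    by_cases hi : i = 0
    · rw [hi]
      rw [Multiset.count_eq_zero_of_notMem]
      · rw [Multiset.count_eq_zero_of_notMem]
        intro a; exact Nat.lt_irrefl 0 (hs 0 (hp₂.2 0 a))
      intro a; exact Nat.lt_irrefl 0 (hs 0 (hp₁.2 0 a))
    · rw [← mul_left_inj' hi]
      rw [funext_iff] at h
      exact h.2 i
  · simp only [φ, mem_filter, mem_finsuppAntidiag, mem_univ, exists_prop, true_and, and_assoc]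
    rintro f ⟨hf, hf₃, hf₄⟩
    have hf' : f ∈ finsuppAntidiag s n := mem_finsuppAntidiag.mpr ⟨hf, hf₃⟩
    simp only [mem_finsuppAntidiag] at hf'
    refine ⟨⟨∑ i ∈ s, Multiset.replicate (f i / i) i, ?_, ?_⟩, ?_, ?_, ?_⟩
    · intro i hi
      simp only [exists_prop, Multiset.mem_sum, mem_map, Function.Embedding.coeFn_mk] at hi
      rcases hi with ⟨t, ht, z⟩
      apply hs
      rwa [Multiset.eq_of_mem_replicate z]
    · simp_rw [Multiset.sum_sum, Multiset.sum_replicate, Nat.nsmul_eq_mul]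
      rw [← hf'.1]
      refine sum_congr rfl fun i hi => Nat.div_mul_cancel ?_
      rcases hf₄ i hi with ⟨w, _, hw₂⟩
      rw [← hw₂]
      exact dvd_mul_left _ _
    · intro i
      simp_rw [Multiset.count_sum', Multiset.count_replicate, sum_ite_eq']
      split_ifs with h
      · rcases hf₄ i h with ⟨w, hw₁, hw₂⟩
        rwa [← hw₂, Nat.mul_div_cancel _ (hs i h)]
      · exact hc _ h
    · intro i hi
      rw [Multiset.mem_sum] at hi
      rcases hi with ⟨j, hj₁, hj₂⟩
      rwa [Multiset.eq_of_mem_replicate hj₂]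
    · ext i
      simp_rw [Multiset.count_sum', Multiset.count_replicate, sum_ite_eq']
      simp only [ne_eq, Multiset.mem_toFinset, not_not, smul_eq_mul, ite_mul,
        zero_mul, Finsupp.coe_mk]
      split_ifs with h
      · apply Nat.div_mul_cancel
        rcases hf₄ i h with ⟨w, _, hw₂⟩
        apply Dvd.intro_left _ hw₂
      · apply symm
        rw [← Finsupp.notMem_support_iff]
        exact notMem_mono hf'.2 h

theorem partialOddGF_prop [Field α] (n m : ℕ) :
    #{p : n.Partition | ∀ j ∈ p.parts, j ∈ (range m).map mkOdd} = coeff (R := α) n (partialOddGF m) := by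
  rw [partialOddGF]
  convert partialGF_prop α n
    ((range m).map mkOdd) _ (fun _ => Set.univ) (fun _ _ => trivial) using 2
  · congr
    simp only [true_and, forall_const, Set.mem_univ]
  · rw [Finset.prod_map]
    simp_rw [num_series']
    congr! 2 with x
    ext k
    constructor
    · rintro ⟨p, rfl⟩
      refine ⟨p, ⟨⟩, ?_⟩
      apply mul_comm
    rintro ⟨a_w, -, rfl⟩
    apply Dvd.intro_left a_w rfl
  · intro i
    rw [mem_map]
    rintro ⟨a, -, rfl⟩
    exact Nat.succ_pos _

/-- If m is big enough, the partial product's coefficient counts the number of odd partitions -/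
theorem oddGF_prop [Field α] (n m : ℕ) (h : n < m * 2) :
    #(Nat.Partition.odds n) = coeff (R := α) n (partialOddGF m) := by
  rw [← partialOddGF_prop, Nat.Partition.odds]
  congr 2 with p
  simp only [Nat.Partition.restricted, mem_filter, mem_univ, true_and, Finset.mem_coe, Set.mem_setOf_eq]
  apply forall₂_congr
  intro i hi
  have hin : i ≤ n := by
    simpa [p.parts_sum] using Multiset.single_le_sum (fun _ _ => Nat.zero_le _) _ hi
  simp only [mkOdd, exists_prop, mem_range, Function.Embedding.coeFn_mk, mem_map]
  constructor
  · intro hi₂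
    have := Nat.mod_add_div i 2
    rw [Nat.not_even_iff] at hi₂
    rw [hi₂, add_comm] at this
    refine ⟨i / 2, ?_, this⟩
    rw [Nat.div_lt_iff_lt_mul zero_lt_two]
    exact lt_of_le_of_lt hin h
  · rintro ⟨a, -, rfl⟩
    rw [even_iff_two_dvd]
    apply Nat.two_not_dvd_two_mul_add_one

theorem partialDistinctGF_prop [CommSemiring α] (n m : ℕ) :
    #{p : n.Partition |
        p.parts.Nodup ∧ ∀ j ∈ p.parts, j ∈ (range m).map ⟨Nat.succ, Nat.succ_injective⟩} =
      coeff (R := α) n (partialDistinctGF m) := by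
  rw [partialDistinctGF]
  convert partialGF_prop α n
    ((range m).map ⟨Nat.succ, Nat.succ_injective⟩) _ (fun _ => {0, 1}) (fun _ _ => Or.inl rfl)
    using 2
  · congr! with p
    rw [Multiset.nodup_iff_count_le_one]
    congr! 1 with i
    rcases Multiset.count i p.parts with (_ | _ | ms) <;> simp
  · simp_rw [Finset.prod_map, two_series]
    congr with i
    simp [Set.image_pair]
  · simp only [mem_map, Function.Embedding.coeFn_mk]
    rintro i ⟨_, _, rfl⟩
    apply Nat.succ_pos

/-- If m is big enough, the partial product's coefficient counts the number of distinct partitions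
-/
theorem distinctGF_prop [CommSemiring α] (n m : ℕ) (h : n < m + 1) :
    #(Nat.Partition.distincts n) = coeff (R := α) n (partialDistinctGF m) := by
  rw [← partialDistinctGF_prop, Nat.Partition.distincts]
  congr with p
  apply (and_iff_left _).symm
  intro i hi
  have : i ≤ n := by
    simpa [p.parts_sum] using Multiset.single_le_sum (fun _ _ => Nat.zero_le _) _ hi
  simp only [mkOdd, exists_prop, mem_range, Function.Embedding.coeFn_mk, mem_map]
  refine ⟨i - 1, ?_, Nat.succ_pred_eq_of_pos (p.parts_pos hi)⟩
  rw [tsub_lt_iff_right (Nat.one_le_iff_ne_zero.mpr (p.parts_pos hi).ne')]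
  exact lt_of_le_of_lt this h

/-- The key proof idea for the partition theorem, showing that the generating functions for both
sequences are ultimately the same (since the factor converges to 0 as m tends to infinity).
It's enough to not take the limit though, and just consider large enough `m`.
-/
theorem same_gf [Field α] (m : ℕ) :
    (partialOddGF m * (range m).prod fun i => 1 - (X : PowerSeries α) ^ (m + i + 1)) =
      partialDistinctGF m := by
  rw [partialOddGF, partialDistinctGF]
  induction' m with m ih
  · simp
  set! π₀ : PowerSeries α := ∏ i ∈ range m, (1 - X ^ (m + 1 + i + 1)) with hπ₀
  set! π₁ : PowerSeries α := ∏ i ∈ range m, (1 - X ^ (2 * i + 1))⁻¹ with hπ₁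
  set! π₂ : PowerSeries α := ∏ i ∈ range m, (1 - X ^ (m + i + 1)) with hπ₂
  set! π₃ : PowerSeries α := ∏ i ∈ range m, (1 + X ^ (i + 1)) with hπ₃
  rw [← hπ₃] at ih
  have h : constantCoeff (R := α) (1 - X ^ (2 * m + 1)) ≠ 0 := by
    rw [RingHom.map_sub, RingHom.map_pow, constantCoeff_one, constantCoeff_X,
      zero_pow (2 * m).succ_ne_zero, sub_zero]
    exact one_ne_zero
  calc
    (∏ i ∈ range (m + 1), (1 - X ^ (2 * i + 1))⁻¹) *
          ∏ i ∈ range (m + 1), (1 - X ^ (m + 1 + i + 1)) =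
        π₁ * (1 - X ^ (2 * m + 1))⁻¹ * (π₀ * (1 - X ^ (m + 1 + m + 1))) := by
      rw [prod_range_succ _ m, ← hπ₁, prod_range_succ _ m, ← hπ₀]
    _ = π₁ * (1 - X ^ (2 * m + 1))⁻¹ * (π₀ * ((1 + X ^ (m + 1)) * (1 - X ^ (m + 1)))) := by
      rw [← sq_sub_sq, one_pow, add_assoc _ m 1, ← two_mul (m + 1), pow_mul']
    _ = π₀ * (1 - X ^ (m + 1)) * (1 - X ^ (2 * m + 1))⁻¹ * (π₁ * (1 + X ^ (m + 1))) := by ring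
    _ =
        (∏ i ∈ range (m + 1), (1 - X ^ (m + 1 + i))) * (1 - X ^ (2 * m + 1))⁻¹ *
          (π₁ * (1 + X ^ (m + 1))) := by
      rw [prod_range_succ', add_zero, hπ₀]; simp_rw [← add_assoc]
    _ = π₂ * (1 - X ^ (m + 1 + m)) * (1 - X ^ (2 * m + 1))⁻¹ * (π₁ * (1 + X ^ (m + 1))) := by
      rw [add_right_comm, hπ₂, ← prod_range_succ]; simp_rw [add_right_comm]
    _ = π₂ * (1 - X ^ (2 * m + 1)) * (1 - X ^ (2 * m + 1))⁻¹ * (π₁ * (1 + X ^ (m + 1))) := by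
      rw [two_mul, add_right_comm _ m 1]
    _ = (1 - X ^ (2 * m + 1)) * (1 - X ^ (2 * m + 1))⁻¹ * π₂ * (π₁ * (1 + X ^ (m + 1))) := by ring
    _ = π₂ * (π₁ * (1 + X ^ (m + 1))) := by rw [PowerSeries.mul_inv_cancel _ h, one_mul]
    _ = π₁ * π₂ * (1 + X ^ (m + 1)) := by ring
    _ = π₃ * (1 + X ^ (m + 1)) := by rw [ih]
    _ = _ := by rw [prod_range_succ]

theorem same_coeffs [Field α] (m n : ℕ) (h : n ≤ m) :
    coeff (R := α) n (partialOddGF m) = coeff (R := α) n (partialDistinctGF m) := by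
  rw [← same_gf, coeff_mul_prod_one_sub_of_lt_order]
  rintro i -
  rw [order_X_pow]
  exact mod_cast Nat.lt_succ_of_le (le_add_right h)

theorem partition_theorem (n : ℕ) : #(Nat.Partition.odds n) = #(Nat.Partition.distincts n) := by
  suffices (#(Nat.Partition.odds n) : ℚ) = #(Nat.Partition.distincts n) from
    mod_cast this
  rw [distinctGF_prop n (n + 1) (by linarith)]
  rw [oddGF_prop n (n + 1) (by linarith)]
  apply same_coeffs (n + 1) n n.le_succ

end

end Theorems100
section SigmaMexWork

open PowerSeries Finset
open scoped Classical

namespace SigmaMexProof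

noncomputable section

open Theorems100

lemma prod_split {M : Type*} [CommMonoid M] (m : ℕ) (g : ℕ → M) :
    ∏ i ∈ range (2 * m), g i = (∏ i ∈ range m, g (2 * i)) * ∏ i ∈ range m, g (2 * i + 1) := by
  induction m with
  | zero => simp
  | succ m ih =>
    have h2 : 2 * (m + 1) = 2 * m + 1 + 1 := by ring
    rw [h2, prod_range_succ, prod_range_succ, prod_range_succ, prod_range_succ, ih,
      mul_mul_mul_comm, mul_assoc]

/-- Generating function (partial) for partitions with odd parts distinct. -/
def podGF (m : ℕ) : PowerSeries ℚ :=
  (∏ i ∈ range m, (1 + (X : PowerSeries ℚ) ^ (2 * i + 1))) *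
    ∏ i ∈ range m, (1 - (X : PowerSeries ℚ) ^ (2 * i + 2))⁻¹

/-- Generating function (partial) for partitions into distinct even parts. -/
def qeGF (m : ℕ) : PowerSeries ℚ :=
  ∏ i ∈ range m, (1 + (X : PowerSeries ℚ) ^ (2 * i + 2))

/-- Generating function (partial) for all partitions. -/
def allGF (m : ℕ) : PowerSeries ℚ :=
  ∏ i ∈ range (2 * m), (1 - (X : PowerSeries ℚ) ^ (i + 1))⁻¹

lemma image_univ_mul (j : ℕ) : ((· * j) '' (Set.univ : Set ℕ)) = {k | j ∣ k} := by
  ext k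
  constructor
  · rintro ⟨p, -, rfl⟩
    exact Dvd.intro_left p rfl
  · rintro ⟨c, rfl⟩
    exact ⟨c, trivial, mul_comm _ _⟩

lemma image_pair_mul (j : ℕ) : ((· * j) '' ({0, 1} : Set ℕ)) = {0, j} := by
  rw [Set.image_pair]
  simp

theorem podGF_prop (n m : ℕ) (h : n < 2 * m + 1) :
    (#{p : n.Partition | ∀ t, Odd t → p.parts.count t ≤ 1} : ℚ) = coeff (R := ℚ) n (podGF m) := by
  rw [podGF]
  convert partialGF_prop ℚ n ((range (2 * m)).map ⟨Nat.succ, Nat.succ_injective⟩) ?_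
      (fun i => if Odd i then ({0, 1} : Set ℕ) else Set.univ) ?_ using 2
  · rfl
  · congr 1
    ext p
    simp only [mem_filter, mem_univ, true_and, Set.mem_setOf_eq]
    constructor
    · intro hp
      constructor
      · intro j
        split_ifs with hj
        · have := hp j hj
          interval_cases hc : p.parts.count j
          · exact Or.inl rfl
          · exact Or.inr rfl
        · trivial
      · intro j hj
        have hj1 : 0 < j := p.parts_pos hj
        have hjn : j ≤ n := by
          simpa [p.parts_sum] using Multiset.single_le_sum (fun _ _ => Nat.zero_le _) _ hj
        simp only [mem_map, mem_range, Function.Embedding.coeFn_mk]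
        exact ⟨j - 1, by omega, by omega⟩
    · intro hp t ht
      have := hp.1 t
      rw [if_pos ht] at this
      rcases this with h0 | h1
      · simp [h0]
      · simp only [Set.mem_singleton_iff] at h1
        omega
  · rw [Finset.prod_map]
    simp only [Function.Embedding.coeFn_mk]
    rw [show (range (2 * m)).prod (fun i => indicatorSeries ℚ ((· * i.succ) ''
        (if Odd i.succ then ({0, 1} : Set ℕ) else Set.univ))) =
        (range (2 * m)).prod (fun i => (fun j => indicatorSeries ℚ ((· * j) ''
        (if Odd j then ({0, 1} : Set ℕ) else Set.univ))) (i + 1)) from rfl,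
      prod_split m]
    congr 1
    · apply Finset.prod_congr rfl
      intro i _
      have h1 : Odd (2 * i + 1) := ⟨i, by ring⟩
      dsimp only
      rw [if_pos h1, image_pair_mul]
      rw [show (2 * i + 1) = (2 * i).succ from rfl, two_series]
    · apply Finset.prod_congr rfl
      intro i _
      have h1 : ¬ Odd (2 * i + 1 + 1) := by
        simp [Nat.odd_iff, Nat.add_mod, Nat.mul_mod]
      dsimp only
      rw [if_neg h1, image_univ_mul]
      rw [show (2 * i + 1 + 1) = (2 * i + 1) + 1 from rfl, num_series']
  · intro i hi
    simp only [mem_map, Function.Embedding.coeFn_mk] at hi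
    obtain ⟨a, -, rfl⟩ := hi
    exact Nat.succ_pos a
  · intro i _
    by_cases hi : Odd i <;> simp [hi]

end

end SigmaMexProof

end SigmaMexWork
namespace SigmaMexProof

noncomputable section

open Theorems100 PowerSeries Finset
open scoped Classical

theorem qeGF_prop (n m : ℕ) (h : n < 2 * m + 1) :
    (#{p : n.Partition | p.parts.Nodup ∧ ∀ j ∈ p.parts, Even j} : ℚ) = coeff (R := ℚ) n (qeGF m) := by
  rw [qeGF]
  convert partialGF_prop ℚ n ((range m).map ⟨fun i => 2 * i + 2, fun x y hxy => by simpa using hxy⟩) ?_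
      (fun _ => ({0, 1} : Set ℕ)) ?_ using 2
  · rfl
  · congr 1
    ext p
    simp only [mem_filter, mem_univ, true_and, Set.mem_setOf_eq]
    constructor
    · rintro ⟨hnd, hev⟩
      constructor
      · intro j
        have := Multiset.nodup_iff_count_le_one.mp hnd j
        interval_cases hc : p.parts.count j
        · exact Or.inl rfl
        · exact Or.inr rfl
      · intro j hj
        have hj1 : 0 < j := p.parts_pos hj
        have hjn : j ≤ n := by
          simpa [p.parts_sum] using Multiset.single_le_sum (fun _ _ => Nat.zero_le _) _ hj
        have hje : Even j := hev j hj
        obtain ⟨a, ha⟩ := hje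
        simp only [mem_map, mem_range, Function.Embedding.coeFn_mk]
        refine ⟨a - 1, by omega, ?_⟩
        show 2 * (a - 1) + 2 = j
        omega
    · rintro ⟨hcount, hmem⟩
      constructor
      · rw [Multiset.nodup_iff_count_le_one]
        intro j
        rcases hcount j with h0 | h1
        · omega
        · simp only [Set.mem_singleton_iff] at h1
          omega
      · intro j hj
        obtain ⟨a, -, rfl⟩ := by simpa only [mem_map, mem_range,
          Function.Embedding.coeFn_mk] using hmem j hj
        exact ⟨a + 1, by show 2 * a + 2 = a + 1 + (a + 1); ring⟩
  · rw [Finset.prod_map]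
    apply Finset.prod_congr rfl
    intro i _
    rw [image_pair_mul, show (2 * i + 2) = (2 * i + 1).succ from rfl, two_series]
    rfl
  · intro i hi
    simp only [mem_map, mem_range, Function.Embedding.coeFn_mk] at hi
    obtain ⟨a, -, rfl⟩ := hi
    exact Nat.succ_pos _
  · intro i _
    exact Or.inl rfl

theorem allGF_prop (n m : ℕ) (h : n < 2 * m + 1) :
    (Fintype.card n.Partition : ℚ) = coeff (R := ℚ) n (allGF m) := by
  rw [allGF]
  convert partialGF_prop ℚ n ((range (2 * m)).map ⟨Nat.succ, Nat.succ_injective⟩) ?_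
      (fun _ => (Set.univ : Set ℕ)) ?_ using 2
  · rfl
  · rw [← Finset.card_univ]
    congr 1
    ext p
    simp only [mem_filter, mem_univ, true_and, Set.mem_univ, forall_const]
    constructor
    · intro _ j hj
      have hj1 : 0 < j := p.parts_pos hj
      have hjn : j ≤ n := by
        simpa [p.parts_sum] using Multiset.single_le_sum (fun _ _ => Nat.zero_le _) _ hj
      simp only [mem_map, mem_range, Function.Embedding.coeFn_mk]
      exact ⟨j - 1, by omega, by omega⟩
    · intro _; trivial
  · rw [Finset.prod_map]
    simp only [Function.Embedding.coeFn_mk]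
    apply Finset.prod_congr rfl
    intro i _
    rw [image_univ_mul, show (i.succ) = i + 1 from rfl, num_series']
  · intro i hi
    simp only [mem_map, Function.Embedding.coeFn_mk] at hi
    obtain ⟨a, -, rfl⟩ := hi
    exact Nat.succ_pos a
  · intro i _
    trivial

theorem keyGF (n m : ℕ) (hn : n ≤ m) (hm : 1 ≤ m) :
    coeff (R := ℚ) n (podGF m * qeGF m) = coeff (R := ℚ) n (allGF m) := by
  have hsplit1 : (∏ i ∈ range m, (1 + (X : PowerSeries ℚ) ^ (2 * i + 1))) * qeGF m =
      partialDistinctGF (2 * m) := by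
    rw [qeGF, partialDistinctGF, prod_split m (fun i => 1 + (X : PowerSeries ℚ) ^ (i + 1))]
  have hsplit2 : allGF m = partialOddGF m *
      ∏ i ∈ range m, (1 - (X : PowerSeries ℚ) ^ (2 * i + 2))⁻¹ := by
    rw [allGF, partialOddGF, prod_split m (fun i => (1 - (X : PowerSeries ℚ) ^ (i + 1))⁻¹)]
  have hpq : podGF m * qeGF m = partialDistinctGF (2 * m) *
      ∏ i ∈ range m, (1 - (X : PowerSeries ℚ) ^ (2 * i + 2))⁻¹ := by
    rw [podGF, ← hsplit1]; ring
  rw [hpq, hsplit2, coeff_mul, coeff_mul]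
  apply Finset.sum_congr rfl
  rintro ⟨a, b⟩ hab
  rw [Finset.HasAntidiagonal.mem_antidiagonal] at hab
  have ha : a ≤ n := by omega
  congr 1
  rw [← distinctGF_prop a (2 * m) (by omega), ← oddGF_prop a m (by omega)]
  exact_mod_cast congrArg (Nat.cast (R := ℚ)) (Theorems100.partition_theorem a).symm

end

end SigmaMexProof
namespace SigmaMexProof

noncomputable section

open Finset
open scoped Classical

/-- The staircase multiset {1, 2, ..., k}. -/
def Rk (k : ℕ) : Multiset ℕ := (Multiset.range k).map (· + 1)

def Tk (k : ℕ) : ℕ := (Rk k).sum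

lemma mem_Rk {i k : ℕ} : i ∈ Rk k ↔ 1 ≤ i ∧ i ≤ k := by
  simp only [Rk, Multiset.mem_map, Multiset.mem_range]
  constructor
  · rintro ⟨a, ha, rfl⟩; omega
  · rintro ⟨h1, h2⟩; exact ⟨i - 1, by omega, by omega⟩

lemma Rk_nodup (k : ℕ) : (Rk k).Nodup :=
  (Multiset.nodup_range k).map (fun a b h => by omega)

lemma card_Rk (k : ℕ) : Multiset.card (Rk k) = k := by simp [Rk]

lemma le_Tk (k : ℕ) : k ≤ Tk k := by
  have : Tk k = (Multiset.range k).sum + k := by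
    rw [Tk, Rk, show ((· + 1) : ℕ → ℕ) = fun i => i + 1 from rfl, Multiset.sum_map_add]
    simp [Multiset.map_id']
  omega

lemma multiset_sum_le_sum {s t : Multiset ℕ} (h : s ≤ t) : s.sum ≤ t.sum := by
  calc s.sum ≤ (t - s).sum + s.sum := Nat.le_add_left _ _
  _ = t.sum := by rw [← Multiset.sum_add, tsub_add_cancel_of_le h]

lemma natCard_subtype (α : Type*) [Fintype α] (p : α → Prop) :
    Nat.card {x // p x} = #(univ.filter p) := by
  rw [Nat.card_eq_fintype_card, Fintype.card_subtype]

lemma natCard_sigma {ι : Type*} [Fintype ι] (f : ι → Type*) [∀ i, Finite (f i)] :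
    Nat.card (Σ i, f i) = ∑ i, Nat.card (f i) := by
  haveI : ∀ i, Fintype (f i) := fun i => Fintype.ofFinite _
  simp [Nat.card_eq_fintype_card]

section Mex

variable {n : ℕ} (l : n.Partition)

lemma parts_le_of_mem {j : ℕ} (hj : j ∈ l.parts) : j ≤ n := by
  simpa [l.parts_sum] using Multiset.single_le_sum (fun _ _ => Nat.zero_le _) _ hj

lemma mex_set_nonempty : {k : ℕ | 0 < k ∧ k ∉ l.parts}.Nonempty := by
  refine ⟨n + 1, Nat.succ_pos n, fun h => ?_⟩
  have := parts_le_of_mem l h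
  omega

lemma mex_le : Nat.Partition.mex l ≤ n + 1 :=
  Nat.sInf_le ⟨Nat.succ_pos n, fun h => by have := parts_le_of_mem l h; omega⟩

lemma lt_mex_iff {k : ℕ} : k < Nat.Partition.mex l ↔ Rk k ≤ l.parts := by
  constructor
  · intro hk
    rw [Multiset.le_iff_count]
    intro i
    by_cases hi : i ∈ Rk k
    · rw [Multiset.count_eq_one_of_mem (Rk_nodup k) hi]
      rw [Multiset.one_le_count_iff_mem]
      by_contra hni
      have h1 : 1 ≤ i := (mem_Rk.mp hi).1
      have h2 : i ≤ k := (mem_Rk.mp hi).2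
      have : Nat.Partition.mex l ≤ i := Nat.sInf_le ⟨h1, hni⟩
      omega
    · rw [Multiset.count_eq_zero_of_notMem hi]
      exact Nat.zero_le _
  · intro hle
    have hmem := Nat.sInf_mem (mex_set_nonempty l)
    rcases hmem with ⟨hpos, hnot⟩
    by_contra hk
    push_neg at hk
    have : Nat.Partition.mex l ∈ Rk k := mem_Rk.mpr ⟨hpos, hk⟩
    exact hnot (Multiset.mem_of_le hle this)

lemma mex_eq_card : Nat.Partition.mex l =
    #((range (n + 2)).filter fun k => Rk k ≤ l.parts) := by
  have h1 : ((range (n + 2)).filter fun k => Rk k ≤ l.parts) = range (Nat.Partition.mex l) := by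
    ext k
    simp only [mem_filter, mem_range]
    rw [← lt_mex_iff l]
    have := mex_le l
    omega
  rw [h1, card_range]

end Mex

/-- The count of partitions of `n` containing the full staircase `{1,...,k}`. -/
lemma card_contains_staircase (n k : ℕ) :
    #((univ : Finset n.Partition).filter fun l => Rk k ≤ l.parts) =
      if Tk k ≤ n then Fintype.card (Nat.Partition (n - Tk k)) else 0 := by
  split_ifs with hT
  · rw [Fintype.card, eq_comm]
    refine Finset.card_bij'
      (i := fun (q : Nat.Partition (n - Tk k)) _ =>
        (⟨q.parts + Rk k, fun {j} hj => by
            rcases Multiset.mem_add.mp hj with h | h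
            · exact q.parts_pos h
            · exact lt_of_lt_of_le Nat.zero_lt_one (mem_Rk.mp h).1, by
            rw [Multiset.sum_add, q.parts_sum]
            show n - Tk k + Tk k = n
            omega⟩ : n.Partition))
      (j := fun (l : n.Partition) hl =>
        (⟨l.parts - Rk k, fun {j} hj =>
            l.parts_pos (Multiset.mem_of_le (Multiset.sub_le_self _ _) hj), by
            simp only [mem_filter, mem_univ, true_and] at hl
            have h2 := tsub_add_cancel_of_le hl
            have h3 := congrArg Multiset.sum h2
            rw [Multiset.sum_add, l.parts_sum] at h3
            show (l.parts - Rk k).sum = n - Tk k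
            have h4 : Tk k = (Rk k).sum := rfl
            omega⟩ : (n - Tk k).Partition)) ?hi ?hj ?li ?ri
    case hi =>
      intro q _
      simp only [mem_filter, mem_univ, true_and]
      exact Multiset.le_add_left _ _
    case hj =>
      intro l _
      exact mem_univ _
    case li =>
      intro q _
      apply Nat.Partition.ext
      show q.parts + Rk k - Rk k = q.parts
      exact add_tsub_cancel_right _ _
    case ri =>
      intro l hl
      simp only [mem_filter, mem_univ, true_and] at hl
      apply Nat.Partition.ext
      show l.parts - Rk k + Rk k = l.parts
      exact tsub_add_cancel_of_le hl
  · rw [Finset.card_eq_zero, Finset.filter_eq_empty_iff]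
    intro l _ hle
    have := multiset_sum_le_sum hle
    rw [l.parts_sum] at this
    exact hT this

end

end SigmaMexProof
namespace SigmaMexProof

noncomputable section

open Finset
open scoped Classical

lemma sigmaMex_eq_sum (n : ℕ) : (∑ l : Nat.Partition n, Nat.Partition.mex l) =
    ∑ k ∈ range (n + 2),
      (if Tk k ≤ n then Fintype.card (Nat.Partition (n - Tk k)) else 0) := by
  have h1 : (∑ l : Nat.Partition n, Nat.Partition.mex l) =
      ∑ l : Nat.Partition n, ∑ k ∈ range (n + 2), (if Rk k ≤ l.parts then 1 else 0) := by
    apply Finset.sum_congr rfl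
    intro l _
    rw [mex_eq_card l, Finset.card_filter]
  rw [h1, Finset.sum_comm]
  apply Finset.sum_congr rfl
  intro k _
  rw [← card_contains_staircase n k, Finset.card_filter]

end

end SigmaMexProof
namespace SigmaMexProof

noncomputable section

open Finset
open scoped Classical

/-- Number of partitions into distinct even parts. -/
def qe (N : ℕ) : ℕ :=
  Nat.card {p : N.Partition // p.parts.Nodup ∧ ∀ j ∈ p.parts, Even j}

def Qcond (M : ℕ) (k : ℕ) (ν : Multiset ℕ) : Prop :=
  (∀ a ∈ ν, 0 < a) ∧ (∀ a ∈ ν, Even a) ∧ ν.Nodup ∧ Tk k + ν.sum = M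

lemma repair {s : Multiset (ℕ × Fin 2)} {c : Fin 2} (h : ∀ p ∈ s, p.2 = c) :
    (s.map Prod.fst).map (fun a => (a, c)) = s := by
  rw [Multiset.map_map]
  calc s.map ((fun a => (a, c)) ∘ Prod.fst)
      = s.map id := Multiset.map_congr rfl (fun p hp => by
        show (p.1, c) = p
        rw [← h p hp])
  _ = s := Multiset.map_id s

lemma unpair {c : Fin 2} (ν : Multiset ℕ) : (ν.map (fun a => (a, c))).map Prod.fst = ν := by
  rw [Multiset.map_map]
  exact Multiset.map_id ν

lemma fin2_split (m : Multiset (ℕ × Fin 2)) :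
    (m.filter fun p => p.2 = 0) + (m.filter fun p => p.2 = 1) = m := by
  conv_rhs => rw [← Multiset.filter_add_not (fun p : ℕ × Fin 2 => p.2 = 0) m]
  congr 1
  apply Multiset.filter_congr
  rintro ⟨a, c⟩ _
  fin_cases c <;> simp

lemma filter0_pair1 (ν : Multiset ℕ) :
    (ν.map (fun a => (a, (1 : Fin 2)))).filter (fun p => p.2 = 0) = 0 :=
  Multiset.filter_eq_nil.mpr (fun p hp => by
    obtain ⟨a, _, rfl⟩ := Multiset.mem_map.mp hp
    exact (by decide : ¬ ((1 : Fin 2) = 0)))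

lemma filter1_pair0 (ν : Multiset ℕ) :
    (ν.map (fun a => (a, (0 : Fin 2)))).filter (fun p => p.2 = 1) = 0 :=
  Multiset.filter_eq_nil.mpr (fun p hp => by
    obtain ⟨a, _, rfl⟩ := Multiset.mem_map.mp hp
    exact (by decide : ¬ ((0 : Fin 2) = 1)))

lemma filter0_pair0 (ν : Multiset ℕ) :
    (ν.map (fun a => (a, (0 : Fin 2)))).filter (fun p => p.2 = 0) =
      ν.map (fun a => (a, (0 : Fin 2))) :=
  Multiset.filter_eq_self.mpr (fun p hp => by
    obtain ⟨a, _, rfl⟩ := Multiset.mem_map.mp hp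
    rfl)

lemma filter1_pair1 (ν : Multiset ℕ) :
    (ν.map (fun a => (a, (1 : Fin 2)))).filter (fun p => p.2 = 1) =
      ν.map (fun a => (a, (1 : Fin 2))) :=
  Multiset.filter_eq_self.mpr (fun p hp => by
    obtain ⟨a, _, rfl⟩ := Multiset.mem_map.mp hp
    rfl)

/-- The decomposition equivalence for `D2star`-type multisets. -/
def d2starEquiv (M : ℕ) :
    {m : Multiset (ℕ × Fin 2) // IsColoredPartition M m ∧ m.Nodup ∧
      (∃ j : ℕ, (m.filter fun p => p.2 = 0).map Prod.fst = (Multiset.range j).map (· + 1)) ∧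
      ∀ p ∈ m, p.2 = 1 → Even p.1} ≃
    {x : ℕ × Multiset ℕ // Qcond M x.1 x.2} where
  toFun := fun x =>
    ⟨(Multiset.card (x.val.filter fun p => p.2 = 0),
      (x.val.filter fun p => p.2 = 1).map Prod.fst), by
      obtain ⟨m, hm⟩ := x
      refine ⟨?_, ?_, ?_, ?_⟩
      · intro a ha
        obtain ⟨p, hp, rfl⟩ := Multiset.mem_map.mp ha
        exact hm.1.1 p (Multiset.mem_of_mem_filter hp)
      · intro a ha
        obtain ⟨p, hp, rfl⟩ := Multiset.mem_map.mp ha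
        exact hm.2.2.2 p (Multiset.mem_of_mem_filter hp) (Multiset.mem_filter.mp hp).2
      · apply Multiset.Nodup.map_on
        · intro a ha b hb hab
          have ha2 : a.2 = 1 := (Multiset.mem_filter.mp ha).2
          have hb2 : b.2 = 1 := (Multiset.mem_filter.mp hb).2
          ext
          · exact hab
          · rw [ha2, hb2]
        · exact Multiset.Nodup.filter _ hm.2.1
      · obtain ⟨j, hj⟩ := hm.2.2.1
        have hcard : Multiset.card (m.filter fun p => p.2 = 0) = j := by
          have := congrArg Multiset.card hj
          simpa [Rk] using this
        have hsum : ((m.filter fun p => p.2 = 0).map Prod.fst).sum +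
            ((m.filter fun p => p.2 = 1).map Prod.fst).sum = M := by
          rw [← Multiset.sum_add, ← Multiset.map_add, fin2_split m, hm.1.2]
        show Tk (Multiset.card (m.filter fun p => p.2 = 0)) + _ = M
        rw [hcard, Tk, show Rk j = (Multiset.range j).map (· + 1) from rfl, ← hj]
        exact hsum⟩
  invFun := fun y =>
    ⟨(Rk y.val.1).map (fun a => (a, (0 : Fin 2))) + y.val.2.map (fun a => (a, (1 : Fin 2))), by
      obtain ⟨⟨k, ν⟩, hQ⟩ := y
      obtain ⟨hpos, hev, hnd, hsum⟩ := hQ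
      refine ⟨⟨?_, ?_⟩, ?_, ⟨k, ?_⟩, ?_⟩
      · intro p hp
        rcases Multiset.mem_add.mp hp with h | h
        · obtain ⟨a, ha, rfl⟩ := Multiset.mem_map.mp h
          exact (mem_Rk.mp ha).1
        · obtain ⟨a, ha, rfl⟩ := Multiset.mem_map.mp h
          exact hpos a ha
      · rw [Multiset.map_add, unpair, unpair, Multiset.sum_add]
        exact hsum
      · rw [Multiset.nodup_add]
        refine ⟨Multiset.Nodup.map (fun a b h => congrArg Prod.fst h) (Rk_nodup k),
          Multiset.Nodup.map (fun a b h => congrArg Prod.fst h) hnd, ?_⟩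
        rw [Multiset.disjoint_left]
        intro p hp0 hp1
        obtain ⟨a, _, rfl⟩ := Multiset.mem_map.mp hp0
        obtain ⟨b, _, hab⟩ := Multiset.mem_map.mp hp1
        have h2 : (1 : Fin 2) = (0 : Fin 2) := congrArg Prod.snd hab
        exact absurd h2 (by decide)
      · rw [Multiset.filter_add, filter0_pair0, filter0_pair1, add_zero, unpair]
        rfl
      · intro p hp h1
        rcases Multiset.mem_add.mp hp with h | h
        · obtain ⟨a, _, rfl⟩ := Multiset.mem_map.mp h
          exact absurd h1 (by decide : ¬ ((0 : Fin 2) = 1))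
        · obtain ⟨a, ha, rfl⟩ := Multiset.mem_map.mp h
          exact hev a ha⟩
  left_inv := fun x => by
    apply Subtype.ext
    obtain ⟨m, hm⟩ := x
    show ((Rk (Multiset.card (m.filter fun p => p.2 = 0))).map (fun a => (a, (0 : Fin 2))) +
      ((m.filter fun p => p.2 = 1).map Prod.fst).map (fun a => (a, (1 : Fin 2)))) = m
    obtain ⟨j, hj⟩ := hm.2.2.1
    have hcard : Multiset.card (m.filter fun p => p.2 = 0) = j := by
      have := congrArg Multiset.card hj
      simpa [Rk] using this
    have hj' : (m.filter fun p => p.2 = 0).map Prod.fst = Rk j := hj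
    rw [hcard, ← hj', repair (fun p hp => (Multiset.mem_filter.mp hp).2),
      repair (fun p hp => (Multiset.mem_filter.mp hp).2)]
    exact fin2_split m
  right_inv := fun y => by
    apply Subtype.ext
    obtain ⟨⟨k, ν⟩, hQ⟩ := y
    show (Multiset.card (((Rk k).map (fun a => (a, (0 : Fin 2))) +
        ν.map (fun a => (a, (1 : Fin 2)))).filter fun p => p.2 = 0),
      (((Rk k).map (fun a => (a, (0 : Fin 2))) +
        ν.map (fun a => (a, (1 : Fin 2)))).filter fun p => p.2 = 1).map Prod.fst) = (k, ν)
    rw [Multiset.filter_add, Multiset.filter_add, filter0_pair0, filter0_pair1,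
      filter1_pair0, filter1_pair1, add_zero, zero_add, unpair]
    rw [Multiset.card_map, card_Rk]

end

end SigmaMexProof
namespace SigmaMexProof

noncomputable section

open Finset PowerSeries
open scoped Classical

def sigmaFiber (M k : ℕ) : Type := {ν : Multiset ℕ // Qcond M k ν}

def fiberEquiv (M k : ℕ) (h : Tk k ≤ M) :
    sigmaFiber M k ≃ {p : (M - Tk k).Partition // p.parts.Nodup ∧ ∀ j ∈ p.parts, Even j} where
  toFun := fun ν => ⟨⟨ν.val, fun {i} hi => ν.prop.1 i hi, by
      have h2 := ν.prop.2.2.2; omega⟩, ν.prop.2.2.1, fun j hj => ν.prop.2.1 j hj⟩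
  invFun := fun p => ⟨p.val.parts, fun a ha => p.val.parts_pos ha, fun a ha => p.prop.2 a ha,
    p.prop.1, by have := p.val.parts_sum; omega⟩
  left_inv := fun ν => rfl
  right_inv := fun p => rfl

lemma fiberEmpty (M k : ℕ) (h : ¬ Tk k ≤ M) : IsEmpty (sigmaFiber M k) := by
  constructor
  intro ν
  have h2 := ν.prop.2.2.2
  exact h (by omega)

instance fiberFinite (M k : ℕ) : Finite (sigmaFiber M k) := by
  by_cases h : Tk k ≤ M
  · exact Finite.of_equiv _ (fiberEquiv M k h).symm
  · exact @Finite.of_subsingleton _ (@IsEmpty.instSubsingleton _ (fiberEmpty M k h))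

lemma natCard_fiber (M k : ℕ) :
    Nat.card (sigmaFiber M k) = if Tk k ≤ M then qe (M - Tk k) else 0 := by
  split_ifs with h
  · rw [Nat.card_congr (fiberEquiv M k h), qe]
  · exact @Nat.card_of_isEmpty _ (fiberEmpty M k h)

def sigmaEquiv (M : ℕ) :
    {x : ℕ × Multiset ℕ // Qcond M x.1 x.2} ≃ Σ k : Fin (M + 1), sigmaFiber M k.val where
  toFun := fun x => ⟨⟨x.val.1, by
      have h1 := x.prop.2.2.2
      have h2 := le_Tk x.val.1
      omega⟩, ⟨x.val.2, x.prop⟩⟩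
  invFun := fun y => ⟨(y.1.val, y.2.val), y.2.prop⟩
  left_inv := fun x => rfl
  right_inv := fun y => rfl

lemma D2star_eq (M : ℕ) :
    D2star M = ∑ k ∈ range (M + 1), (if Tk k ≤ M then qe (M - Tk k) else 0) := by
  rw [D2star, Nat.card_congr (d2starEquiv M), Nat.card_congr (sigmaEquiv M),
    natCard_sigma]
  rw [← Fin.sum_univ_eq_sum_range (fun k => if Tk k ≤ M then qe (M - Tk k) else 0) (M + 1)]
  exact Finset.sum_congr rfl (fun k _ => natCard_fiber M k.val)

lemma pod_cast (j m : ℕ) (h : j < 2 * m + 1) :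
    ((pod j : ℕ) : ℚ) = coeff (R := ℚ) j (podGF m) := by
  rw [pod, natCard_subtype]
  exact podGF_prop j m h

lemma qe_cast (b m : ℕ) (h : b < 2 * m + 1) :
    ((qe b : ℕ) : ℚ) = coeff (R := ℚ) b (qeGF m) := by
  rw [qe, natCard_subtype]
  have h2 := qeGF_prop b m h
  rw [Finset.filter_congr_decidable] at h2
  rw [show (@Finset.filter _ (fun p : b.Partition => p.parts.Nodup ∧ ∀ j ∈ p.parts, Even j)
    (Classical.decPred _) Finset.univ) = Finset.filter
    (fun p : b.Partition => p.parts.Nodup ∧ ∀ j ∈ p.parts, Even j) Finset.univ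
    from Finset.filter_congr_decidable _ _ _]
  exact h2

lemma conv_pod_qe (N : ℕ) :
    (∑ j ∈ range (N + 1), pod j * qe (N - j)) = Fintype.card (Nat.Partition N) := by
  have key : ((∑ j ∈ range (N + 1), pod j * qe (N - j) : ℕ) : ℚ) =
      (Fintype.card (Nat.Partition N) : ℚ) := by
    push_cast
    have h1 : (∑ j ∈ range (N + 1), (pod j : ℚ) * (qe (N - j) : ℚ)) =
        ∑ j ∈ range (N + 1), coeff (R := ℚ) j (podGF (N + 1)) * coeff (R := ℚ) (N - j) (qeGF (N + 1)) := by
      apply Finset.sum_congr rfl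
      intro j hj
      rw [mem_range] at hj
      rw [pod_cast j (N + 1) (by omega), qe_cast (N - j) (N + 1) (by omega)]
    rw [h1]
    have h2 : coeff (R := ℚ) N (podGF (N + 1) * qeGF (N + 1)) =
        ∑ j ∈ range (N + 1), coeff (R := ℚ) j (podGF (N + 1)) * coeff (R := ℚ) (N - j) (qeGF (N + 1)) := by
      rw [coeff_mul, Finset.Nat.sum_antidiagonal_eq_sum_range_succ_mk]
    rw [← h2, keyGF N (N + 1) (by omega) (by omega), ← allGF_prop N (N + 1) (by omega)]
  exact_mod_cast key

end

end SigmaMexProof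
namespace SigmaMexProof

noncomputable section

open Finset
open scoped Classical

theorem final (n : ℕ) : sigmaMex n = ∑ j ∈ range (n + 1), pod j * D2star (n - j) := by
  have hD : ∀ j ∈ range (n + 1), pod j * D2star (n - j) =
      ∑ k ∈ range (n + 2), pod j * (if Tk k ≤ n - j then qe (n - j - Tk k) else 0) := by
    intro j hj
    rw [D2star_eq (n - j), Finset.mul_sum]
    apply Finset.sum_subset
    · apply Finset.range_subset_range.mpr
      rw [mem_range] at hj
      omega
    · intro k _ hk
      rw [mem_range] at hk
      push_neg at hk
      have h1 : Tk k ≥ k := le_Tk k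
      rw [if_neg (by omega), mul_zero]
  rw [Finset.sum_congr rfl hD, Finset.sum_comm]
  rw [sigmaMex, sigmaMex_eq_sum n]
  apply Finset.sum_congr rfl
  intro k _
  by_cases hT : Tk k ≤ n
  · rw [if_pos hT]
    set N := n - Tk k with hN
    have hstep : ∀ j ∈ range (n + 1),
        pod j * (if Tk k ≤ n - j then qe (n - j - Tk k) else 0) =
        (if j ∈ range (N + 1) then pod j * qe (N - j) else 0) := by
      intro j hj
      rw [mem_range] at hj
      by_cases hjN : j ≤ N
      · rw [if_pos (by omega), if_pos (by rw [mem_range]; omega)]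
        congr 2
        omega
      · rw [if_neg (by omega), if_neg (by rw [mem_range]; omega), mul_zero]
    rw [Finset.sum_congr rfl hstep, Finset.sum_ite_mem, Finset.inter_eq_right.mpr
      (Finset.range_subset_range.mpr (by omega))]
    exact (conv_pod_qe N).symm
  · rw [if_neg hT, eq_comm]
    apply Finset.sum_eq_zero
    intro j _
    rw [if_neg (by omega), mul_zero]

end

end SigmaMexProof

theorem stmt12 (n : ℕ) :
    sigmaMex n = ∑ j ∈ Finset.range (n + 1), pod j * D2star (n - j) := SigmaMexProof.final n
end

section
/- For all integers r > 0 and n ≥ 0, σmex_r(n) = Σ_{j ≥ 0} p(n − r·j(j+1)/2), where σmex_r(n) is the sum over all partitions λ of n of the least positive integer that does not appear at least r times as a part of λ. -/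
open scoped Classical

def triAux (j : ℕ) : ℕ := j * (j + 1) / 2

def baseAux (r j : ℕ) : Multiset ℕ := r • ((Multiset.range j).map (· + 1))

lemma triAux_two (j : ℕ) : 2 * triAux j = j * (j + 1) := by
  have : 2 ∣ j * (j + 1) := (Nat.even_mul_succ_self j).two_dvd
  unfold triAux; omega

lemma baseAux_sum (r j : ℕ) : (baseAux r j).sum = r * triAux j := by
  have h2 : ((Multiset.range j).map (· + 1)).sum = triAux j := by
    induction j with
    | zero => simp [triAux]
    | succ j ih =>
        rw [Multiset.range_succ, Multiset.map_cons, Multiset.sum_cons, ih]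
        show j + 1 + triAux j = triAux (j + 1)
        have h1 := triAux_two j; have h2 := triAux_two (j+1)
        have e : (j+1) * (j+1+1) = j * (j+1) + 2 * (j+1) := by ring
        omega
  simp [baseAux, Multiset.sum_nsmul, h2]

lemma baseAux_count (r j k : ℕ) :
    (baseAux r j).count k = if 0 < k ∧ k ≤ j then r else 0 := by
  rw [baseAux, Multiset.count_nsmul]
  rcases Nat.eq_zero_or_pos k with hk | hk
  · subst hk
    have : (0 : ℕ) ∉ (Multiset.range j).map (· + 1) := by simp
    simp [Multiset.count_eq_zero_of_notMem this]
  · obtain ⟨m, rfl⟩ : ∃ m, k = m + 1 := ⟨k - 1, by omega⟩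
    have hinj : Function.Injective (· + 1 : ℕ → ℕ) := fun a b h => by simpa using h
    rw [Multiset.count_map_eq_count' _ _ hinj]
    by_cases hm : m < j
    · rw [Multiset.count_eq_one_of_mem (Multiset.nodup_range j) (Multiset.mem_range.2 hm),
        if_pos ⟨by omega, by omega⟩]; omega
    · rw [Multiset.count_eq_zero_of_notMem (by simpa using hm), if_neg (by omega)]; omega

lemma mem_rgap_set {n : ℕ} (l : n.Partition) (r : ℕ) (hr : 0 < r) :
    (n + 1) ∈ {k : ℕ | 0 < k ∧ l.parts.count k < r} := by
  refine ⟨Nat.succ_pos n, ?_⟩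
  have h0 : l.parts.count (n + 1) = 0 := by
    rw [Multiset.count_eq_zero]
    intro hmem
    have := Multiset.le_sum_of_mem hmem
    rw [l.parts_sum] at this; omega
  omega

lemma lt_rgap_iff {n : ℕ} (l : n.Partition) (r j : ℕ) (hr : 0 < r) :
    j < l.rgap r ↔ ∀ k, 0 < k → k ≤ j → r ≤ l.parts.count k := by
  constructor
  · intro h k hk hkj
    by_contra hc
    have := Nat.sInf_le (s := {k : ℕ | 0 < k ∧ l.parts.count k < r}) ⟨hk, by omega⟩
    unfold Nat.Partition.rgap at h; omega
  · intro h
    have hne : {k : ℕ | 0 < k ∧ l.parts.count k < r}.Nonempty := ⟨n + 1, mem_rgap_set l r hr⟩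
    have hmem := Nat.sInf_mem hne
    by_contra hc
    push_neg at hc
    unfold Nat.Partition.rgap at hc
    have h1 := hmem.1
    have h2 := hmem.2
    have h3 := h _ h1 hc
    omega

lemma rgap_le {n : ℕ} (l : n.Partition) (r : ℕ) (hr : 0 < r) : l.rgap r ≤ n + 1 :=
  Nat.sInf_le (mem_rgap_set l r hr)

lemma baseAux_le {n : ℕ} (r j : ℕ) (l : n.Partition)
    (h : ∀ k, 0 < k → k ≤ j → r ≤ l.parts.count k) : baseAux r j ≤ l.parts := by
  rw [Multiset.le_iff_count]
  intro k
  rw [baseAux_count]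
  split
  · exact h k (by omega) (by omega)
  · omega

noncomputable def partEquiv (r j n : ℕ) (h : r * triAux j ≤ n) :
    {l : n.Partition // ∀ k, 0 < k → k ≤ j → r ≤ l.parts.count k} ≃
      (n - r * triAux j).Partition where
  toFun l := ⟨l.1.parts - baseAux r j,
    fun {x} hx => l.1.parts_pos (Multiset.mem_of_le (Multiset.sub_le_self _ _) hx),
    by
      have hle := baseAux_le r j l.1 l.2
      have heq := congrArg Multiset.sum (tsub_add_cancel_of_le hle)
      rw [Multiset.sum_add, l.1.parts_sum, baseAux_sum] at heq
      omega⟩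
  invFun m := ⟨⟨m.parts + baseAux r j,
    fun {x} hx => by
      rcases Multiset.mem_add.1 hx with hx | hx
      · exact m.parts_pos hx
      · rw [baseAux] at hx
        rcases Multiset.mem_nsmul.1 hx with ⟨-, hx⟩
        · simp only [Multiset.mem_map, Multiset.mem_range] at hx
          obtain ⟨a, -, rfl⟩ := hx
          omega,
    by rw [Multiset.sum_add, m.parts_sum, baseAux_sum]; omega⟩,
    fun k hk hkj => by
      simp only [Multiset.count_add, baseAux_count]
      rw [if_pos ⟨hk, hkj⟩]; omega⟩
  left_inv l := by
    apply Subtype.ext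
    apply Nat.Partition.ext
    exact tsub_add_cancel_of_le (baseAux_le r j l.1 l.2)
  right_inv m := by
    apply Nat.Partition.ext
    exact add_tsub_cancel_right _ _

lemma triAux_cast (j : ℕ) : ((triAux j : ℕ) : ℤ) = (j : ℤ) * ((j : ℤ) + 1) / 2 := by
  unfold triAux
  rw [Int.natCast_ediv]
  push_cast
  ring_nf

lemma triAux_ge (j : ℕ) : j ≤ triAux j := by
  have h := triAux_two j
  have e : j * (j + 1) = j * j + j := by ring
  rcases Nat.eq_zero_or_pos j with hj | hj
  · omega
  · have e2 : j ≤ j * j := Nat.le_mul_of_pos_left j hj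
    omega

lemma card_key (r j n : ℕ) (hr : 0 < r) :
    (Fintype.card {l : Nat.Partition n // j < l.rgap r} : ℤ)
      = partitionsZ ((n : ℤ) - r * ((j : ℤ) * ((j : ℤ) + 1) / 2)) := by
  have hiff : ∀ l : Nat.Partition n,
      j < l.rgap r ↔ ∀ k, 0 < k → k ≤ j → r ≤ l.parts.count k :=
    fun l => lt_rgap_iff l r j hr
  rw [Fintype.card_congr (Equiv.subtypeEquivRight hiff)]
  have harg : (n : ℤ) - r * ((j : ℤ) * ((j : ℤ) + 1) / 2)
      = (n : ℤ) - ((r * triAux j : ℕ) : ℤ) := by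
    rw [Nat.cast_mul, triAux_cast]
  rw [harg]
  by_cases h : r * triAux j ≤ n
  · rw [Fintype.card_congr (partEquiv r j n h)]
    rw [← Nat.cast_sub h]
    unfold partitionsZ
    rw [if_pos (by positivity), Int.toNat_natCast]
  · have hempty : IsEmpty {l : Nat.Partition n // ∀ k, 0 < k → k ≤ j → r ≤ l.parts.count k} := by
      constructor
      rintro ⟨l, hl⟩
      have hle := baseAux_le r j l hl
      obtain ⟨u, hu⟩ := Multiset.le_iff_exists_add.1 hle
      have := congrArg Multiset.sum hu
      rw [Multiset.sum_add, l.parts_sum, baseAux_sum] at this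
      omega
    rw [Fintype.card_eq_zero]
    unfold partitionsZ
    rw [if_neg (by push_cast; omega)]
    simp

theorem stmt15 (r n : ℕ) (hr : 0 < r) :
    (sigmaMexR r n : ℤ) = ∑' j : ℕ, partitionsZ ((n : ℤ) - r * (j * (j + 1) / 2)) := by
  have hvanish : ∀ j ∉ Finset.range (n + 1),
      partitionsZ ((n : ℤ) - r * ((j : ℤ) * ((j : ℤ) + 1) / 2)) = 0 := by
    intro j hj
    rw [Finset.mem_range, not_lt] at hj
    have harg : (n : ℤ) - r * ((j : ℤ) * ((j : ℤ) + 1) / 2)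
        = (n : ℤ) - ((r * triAux j : ℕ) : ℤ) := by
      rw [Nat.cast_mul, triAux_cast]
    rw [harg]
    have h1 := triAux_ge j
    have h2 : n < r * triAux j := by
      calc n < 1 * triAux j := by omega
      _ ≤ r * triAux j := Nat.mul_le_mul_right _ hr
    unfold partitionsZ
    rw [if_neg (by push_cast; omega)]
  rw [tsum_eq_sum (s := Finset.range (n + 1)) hvanish]
  have hnat : sigmaMexR r n
      = ∑ j ∈ Finset.range (n + 1), Fintype.card {l : Nat.Partition n // j < l.rgap r} := by
    unfold sigmaMexR
    have hrgap : ∀ l : Nat.Partition n,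
        l.rgap r = ∑ j ∈ Finset.range (n + 1), if j < l.rgap r then 1 else 0 := by
      intro l
      rw [← Finset.card_filter]
      have : (Finset.range (n + 1)).filter (fun j => j < l.rgap r) = Finset.range (l.rgap r) := by
        ext a
        simp only [Finset.mem_filter, Finset.mem_range]
        have := rgap_le l r hr
        omega
      rw [this, Finset.card_range]
    calc ∑ l : Nat.Partition n, l.rgap r
        = ∑ l : Nat.Partition n, ∑ j ∈ Finset.range (n + 1), if j < l.rgap r then 1 else 0 :=
          Finset.sum_congr rfl fun l _ => hrgap l
      _ = ∑ j ∈ Finset.range (n + 1), ∑ l : Nat.Partition n, if j < l.rgap r then 1 else 0 :=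
          Finset.sum_comm
      _ = ∑ j ∈ Finset.range (n + 1), Fintype.card {l : Nat.Partition n // j < l.rgap r} := by
          refine Finset.sum_congr rfl fun j _ => ?_
          rw [Fintype.card_subtype, Finset.card_filter]
  rw [hnat]
  push_cast
  exact Finset.sum_congr rfl fun j _ => card_key r j n hr
end

section
/- The number of partitions of a non-negative integer n into distinct parts, q(n), is odd if and only if n = j(3j±1)/2 for some non-negative integer j (i.e., n is a generalized pentagonal number). -/
open scoped Classical

section Stmt17Aux
open Finset

lemma even_card_filter_ne {α : Type*} [DecidableEq α] (s : Finset α) (f : α → α)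
    (hmem : ∀ a ∈ s, f a ∈ s) (hinv : ∀ a ∈ s, f (f a) = a) :
    Even ((s.filter fun a => f a ≠ a).card) := by
  induction s using Finset.strongInduction with
  | _ s IH =>
    by_cases h : ∃ a ∈ s, f a ≠ a
    · obtain ⟨a, ha, hfa⟩ := h
      have hfas : f a ∈ s := hmem a ha
      have hsub : (s.erase a).erase (f a) ⊂ s :=
        lt_of_le_of_lt (Finset.erase_subset _ _) (Finset.erase_ssubset ha)
      have hmem' : ∀ b ∈ (s.erase a).erase (f a), f b ∈ (s.erase a).erase (f a) := by
        intro b hb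
        simp only [Finset.mem_erase] at hb ⊢
        obtain ⟨h1, h2, hbs⟩ := hb
        refine ⟨?_, ?_, hmem b hbs⟩
        · intro hcon; apply h2; rw [← hinv b hbs, hcon, hinv a ha]
        · intro hcon; apply h1; rw [← hinv b hbs, hcon]
      have hinv' : ∀ b ∈ (s.erase a).erase (f a), f (f b) = b :=
        fun b hb => hinv b (hsub.1 hb)
      have haf : a ∈ s.filter fun a => f a ≠ a := Finset.mem_filter.2 ⟨ha, hfa⟩
      have hfaf : f a ∈ (s.filter fun a => f a ≠ a).erase a := by
        refine Finset.mem_erase.2 ⟨hfa, Finset.mem_filter.2 ⟨hfas, ?_⟩⟩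
        rw [hinv a ha]; exact fun hc => hfa hc.symm
      have h2le : 2 ≤ ((s.filter fun a => f a ≠ a)).card := by
        have hpair : ({a, f a} : Finset α) ⊆ s.filter fun a => f a ≠ a := by
          intro x hx
          rcases Finset.mem_insert.1 hx with rfl | hx
          · exact haf
          · rw [Finset.mem_singleton.1 hx]; exact Finset.mem_of_mem_erase hfaf
        have hp2 : ({a, f a} : Finset α).card = 2 := Finset.card_pair (Ne.symm hfa)
        rw [← hp2]; exact Finset.card_le_card hpair
      have hcard : (((s.erase a).erase (f a)).filter fun a => f a ≠ a).card + 2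
          = ((s.filter fun a => f a ≠ a)).card := by
        rw [Finset.filter_erase, Finset.filter_erase, Finset.card_erase_of_mem hfaf,
          Finset.card_erase_of_mem haf, Nat.sub_sub, Nat.sub_add_cancel h2le]
      have hiH := IH _ hsub hmem' hinv'
      exact hcard ▸ (hiH.add even_two)
    · push_neg at h
      have : (s.filter fun a => f a ≠ a) = ∅ := by
        rw [Finset.filter_eq_empty_iff]; intro a ha; simpa using h a ha
      simp [this]

lemma sum_Icc_two (a b : ℕ) (h : a ≤ b + 1) :
    (∑ i ∈ Finset.Icc a b, i) * 2 + a * (a - 1) = (b + 1) * b := by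
  have h3 : (∑ i ∈ Finset.Ico 0 a, i) + (∑ i ∈ Finset.Ico a (b+1), i)
      = ∑ i ∈ Finset.Ico 0 (b+1), i :=
    Finset.sum_Ico_consecutive _ (Nat.zero_le a) h
  have h1 : (∑ i ∈ Finset.range a, i) * 2 = a * (a - 1) := Finset.sum_range_id_mul_two a
  have h2 : (∑ i ∈ Finset.range (b+1), i) * 2 = (b+1) * b := by
    simpa using Finset.sum_range_id_mul_two (b+1)
  rw [show Finset.Icc a b = Finset.Ico a (b+1) from by rw [Finset.Ico_add_one_right_eq_Icc], ← h1, ← h2,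
    Finset.range_eq_Ico, Finset.range_eq_Ico]
  omega

noncomputable def stair (A : Finset ℕ) (M : ℕ) : ℕ := sInf {k | M - k ∉ A}

noncomputable def frank (A : Finset ℕ) : Finset ℕ :=
  if h : A.Nonempty ∧ 0 ∉ A then
    let M := A.max' h.1
    let s := A.min' h.1
    let σ := stair A M
    if s ≤ σ then
      if M + 1 = 2 * s then A
      else insert (M + 1) ((A.erase s).erase (M + 1 - s))
    else
      if M = 2 * σ then A
      else insert σ (insert (M - σ) (A.erase M))
  else A

lemma stair_facts {A : Finset ℕ} (hne : A.Nonempty) (h0 : 0 ∉ A) :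
    1 ≤ stair A (A.max' hne) ∧ stair A (A.max' hne) ≤ A.max' hne ∧
    (A.max' hne - stair A (A.max' hne)) ∉ A ∧
    ∀ k < stair A (A.max' hne), A.max' hne - k ∈ A := by
  set M := A.max' hne with hM
  have hMA : M ∈ A := A.max'_mem hne
  have hnonem : (setOf fun k => M - k ∉ A).Nonempty := ⟨M, by show M - M ∉ A; simpa using h0⟩
  have hmem : M - stair A M ∉ A := Nat.sInf_mem hnonem
  have h1 : 1 ≤ stair A M := by
    rcases Nat.eq_zero_or_pos (stair A M) with h | h
    · exfalso; apply hmem; rw [h]; simpa using hMA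
    · exact h
  refine ⟨h1, Nat.sInf_le (by simpa using h0), hmem, fun k hk => ?_⟩
  by_contra hc
  exact absurd (Nat.sInf_le hc) (not_le.2 hk)

lemma frank_of_pos {A : Finset ℕ} (hne : A.Nonempty) (h0 : 0 ∉ A) :
    frank A = if A.min' hne ≤ stair A (A.max' hne) then
        (if A.max' hne + 1 = 2 * A.min' hne then A
         else insert (A.max' hne + 1)
           ((A.erase (A.min' hne)).erase (A.max' hne + 1 - A.min' hne)))
      else (if A.max' hne = 2 * stair A (A.max' hne) then A
         else insert (stair A (A.max' hne))
           (insert (A.max' hne - stair A (A.max' hne)) (A.erase (A.max' hne)))) := by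
  rw [frank, dif_pos ⟨hne, h0⟩]

lemma frank_of_empty : frank ∅ = ∅ := by
  rw [frank, dif_neg]; simp

lemma case1_all {A : Finset ℕ} (hne : A.Nonempty) (h0 : 0 ∉ A)
    (hc : A.min' hne ≤ stair A (A.max' hne)) (hx : A.max' hne + 1 ≠ 2 * A.min' hne) :
    0 ∉ frank A ∧ (frank A).sum id = A.sum id ∧ frank (frank A) = A := by
  obtain ⟨hσ1, hσM, hσout, hstep⟩ := stair_facts hne h0
  set M := A.max' hne with hM
  set s := A.min' hne with hs
  set σ := stair A M with hσ
  have hMA : M ∈ A := A.max'_mem hne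
  have hsA : s ∈ A := A.min'_mem hne
  have hs1 : 1 ≤ s := Nat.pos_of_ne_zero (fun h => h0 (h ▸ hsA))
  have hxle : ∀ x ∈ A, x ≤ M := fun x hx => A.le_max' x hx
  have hxge : ∀ x ∈ A, s ≤ x := fun x hx => A.min'_le x hx
  have hsM : s ≤ M := hxle s hsA
  have hMs_mem : M + 1 - s ∈ A := by
    have h1 : s - 1 < σ := by omega
    have h2 := hstep _ h1
    have he : M - (s - 1) = M + 1 - s := by omega
    rwa [he] at h2
  have hMs_gt : s < M + 1 - s := by
    have := hxge _ hMs_mem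
    omega
  set B := insert (M + 1) ((A.erase s).erase (M + 1 - s)) with hB
  have hfr : frank A = B := by
    rw [frank_of_pos hne h0, if_pos hc, if_neg hx]
  have hmemB : ∀ x, x ∈ B ↔ x = M + 1 ∨ (x ∈ A ∧ x ≠ s ∧ x ≠ M + 1 - s) := by
    intro x
    simp only [hB, Finset.mem_insert, Finset.mem_erase]
    tauto
  have hBne : B.Nonempty := ⟨M + 1, (hmemB _).2 (Or.inl rfl)⟩
  have hB0 : 0 ∉ B := by
    intro h
    rcases (hmemB 0).1 h with h | h
    · omega
    · exact h0 h.1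
  -- sum
  have e0 : M + 1 ∉ (A.erase s).erase (M + 1 - s) := by
    intro h
    have := hxle _ (Finset.mem_of_mem_erase (Finset.mem_of_mem_erase h))
    omega
  have e2 : M + 1 - s ∈ A.erase s := Finset.mem_erase.2 ⟨by omega, hMs_mem⟩
  have hsum : B.sum id = A.sum id := by
    have t1 : B.sum id = (M + 1) + ((A.erase s).erase (M + 1 - s)).sum id := by
      rw [hB, Finset.sum_insert e0]; rfl
    have t2 : ((A.erase s).erase (M + 1 - s)).sum id + (M + 1 - s) = (A.erase s).sum id := by
      simpa using Finset.sum_erase_add (A.erase s) id e2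
    have t3 : (A.erase s).sum id + s = A.sum id := by
      simpa using Finset.sum_erase_add A id hsA
    omega
  -- shape data of B
  have hmax : B.max' hBne = M + 1 := by
    apply le_antisymm
    · apply Finset.max'_le
      intro x hxB
      rcases (hmemB x).1 hxB with rfl | ⟨hxA, _, _⟩
      · exact le_rfl
      · exact (hxle x hxA).trans (by omega)
    · exact B.le_max' _ ((hmemB _).2 (Or.inl rfl))
  have hmin : s + 1 ≤ B.min' hBne := by
    apply Finset.le_min'
    intro x hxB
    rcases (hmemB x).1 hxB with rfl | ⟨hxA, hxs, _⟩
    · omega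
    · have := hxge x hxA; omega
  have hnotB : M + 1 - s ∉ B := by
    intro h
    rcases (hmemB _).1 h with h | ⟨_, _, h⟩
    · omega
    · exact h rfl
  have hstairB : stair B (M + 1) = s := by
    apply le_antisymm
    · exact Nat.sInf_le hnotB
    · by_contra hlt
      push_neg at hlt
      have hne' : (setOf fun k => M + 1 - k ∉ B).Nonempty := ⟨s, hnotB⟩
      have hout : M + 1 - stair B (M + 1) ∉ B := Nat.sInf_mem hne'
      apply hout
      set k := stair B (M + 1) with hk
      rcases Nat.eq_zero_or_pos k with hk0 | hk1
      · rw [hk0, Nat.sub_zero]; exact (hmemB _).2 (Or.inl rfl)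
      · apply (hmemB _).2
        right
        have h1 : k - 1 < σ := by omega
        have h2 := hstep _ h1
        have he : M - (k - 1) = M + 1 - k := by omega
        rw [he] at h2
        exact ⟨h2, by omega, by omega⟩
  have hfrB : frank B = A := by
    rw [frank_of_pos hBne hB0, hmax, hstairB, if_neg (by omega), if_neg (by omega)]
    have e1 : B.erase (M + 1) = (A.erase s).erase (M + 1 - s) := by
      rw [hB, Finset.erase_insert e0]
    have e3 : M + 1 - s = (M + 1) - s := rfl
    rw [e1, ← e3, Finset.insert_erase e2, Finset.insert_erase hsA]
  exact ⟨hfr ▸ hB0, hfr ▸ hsum, by rw [hfr, hfrB]⟩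

lemma case2_all {A : Finset ℕ} (hne : A.Nonempty) (h0 : 0 ∉ A)
    (hc : ¬ A.min' hne ≤ stair A (A.max' hne)) (hx : A.max' hne ≠ 2 * stair A (A.max' hne)) :
    0 ∉ frank A ∧ (frank A).sum id = A.sum id ∧ frank (frank A) = A := by
  obtain ⟨hσ1, hσM, hσout, hstep⟩ := stair_facts hne h0
  have hfr : frank A = insert (stair A (A.max' hne))
      (insert (A.max' hne - stair A (A.max' hne)) (A.erase (A.max' hne))) := by
    rw [frank_of_pos hne h0, if_neg hc, if_neg hx]
  push_neg at hc
  set M := A.max' hne with hM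
  set s := A.min' hne with hs
  set σ := stair A M with hσ
  have hMA : M ∈ A := A.max'_mem hne
  have hsA : s ∈ A := A.min'_mem hne
  have hs1 : 1 ≤ s := Nat.pos_of_ne_zero (fun h => h0 (h ▸ hsA))
  have hxle : ∀ x ∈ A, x ≤ M := fun x hx => A.le_max' x hx
  have hxge : ∀ x ∈ A, s ≤ x := fun x hx => A.min'_le x hx
  have hsM : s ≤ M := hxle s hsA
  have hσA : σ ∉ A := fun h => by have := hxge _ h; omega
  have hM2 : 2 * σ + 1 ≤ M := by
    have h1 : σ - 1 < σ := by omega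
    have h2 := hxge _ (hstep _ h1)
    omega
  set B := insert σ (insert (M - σ) (A.erase M)) with hB
  have hmemB : ∀ x, x ∈ B ↔ x = σ ∨ x = M - σ ∨ (x ∈ A ∧ x ≠ M) := by
    intro x
    simp only [hB, Finset.mem_insert, Finset.mem_erase]
    tauto
  have hBne : B.Nonempty := ⟨σ, (hmemB _).2 (Or.inl rfl)⟩
  have hB0 : 0 ∉ B := by
    intro h
    rcases (hmemB 0).1 h with h | h | h
    · omega
    · omega
    · exact h0 h.1
  have e0 : σ ∉ insert (M - σ) (A.erase M) := by
    intro h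
    rcases Finset.mem_insert.1 h with h | h
    · omega
    · exact hσA (Finset.mem_of_mem_erase h)
  have e1 : M - σ ∉ A.erase M := fun h => hσout (Finset.mem_of_mem_erase h)
  have hsum : B.sum id = A.sum id := by
    have t1 : B.sum id = σ + (insert (M - σ) (A.erase M)).sum id := by
      rw [hB, Finset.sum_insert e0]; rfl
    have t2 : (insert (M - σ) (A.erase M)).sum id = (M - σ) + (A.erase M).sum id := by
      rw [Finset.sum_insert e1]; rfl
    have t3 : (A.erase M).sum id + M = A.sum id := by
      simpa using Finset.sum_erase_add A id hMA
    omega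
  have hmax : B.max' hBne = M - 1 := by
    apply le_antisymm
    · apply Finset.max'_le
      intro x hxB
      rcases (hmemB x).1 hxB with rfl | rfl | ⟨hxA, hxM⟩
      · omega
      · omega
      · have := hxle x hxA; omega
    · apply B.le_max'
      rcases Nat.eq_or_lt_of_le hσ1 with h1 | h1
      · apply (hmemB _).2
        right; left; omega
      · apply (hmemB _).2
        right; right
        have h2 := hstep 1 h1
        have he : M - 1 = M - 1 := rfl
        exact ⟨h2, by omega⟩
  have hmin : B.min' hBne = σ := by
    apply le_antisymm
    · exact B.min'_le _ ((hmemB _).2 (Or.inl rfl))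
    · apply Finset.le_min'
      intro x hxB
      rcases (hmemB x).1 hxB with rfl | rfl | ⟨hxA, _⟩
      · exact le_rfl
      · omega
      · have := hxge x hxA; omega
  have hstairlow : σ ≤ stair B (M - 1) := by
    by_contra hlt
    push_neg at hlt
    have hne' : (setOf fun k => M - 1 - k ∉ B).Nonempty := by
      refine ⟨M - 1, ?_⟩
      have : M - 1 - (M - 1) = 0 := by omega
      show M - 1 - (M - 1) ∉ B; rw [this]
      exact hB0
    have hout : M - 1 - stair B (M - 1) ∉ B := Nat.sInf_mem hne'
    apply hout
    set k := stair B (M - 1) with hk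
    rcases Nat.eq_or_lt_of_le (by omega : k ≤ σ - 1) with hk1 | hk1
    · apply (hmemB _).2
      right; left; omega
    · apply (hmemB _).2
      right; right
      have h1 : k + 1 < σ := by omega
      have h2 := hstep _ h1
      have he : M - (k + 1) = M - 1 - k := by omega
      rw [he] at h2
      exact ⟨h2, by omega⟩
  have hfrB : frank B = A := by
    rw [frank_of_pos hBne hB0, hmax, hmin, if_pos hstairlow, if_neg (by omega)]
    have hM1 : M - 1 + 1 = M := by omega
    rw [hM1]
    have f1 : B.erase σ = insert (M - σ) (A.erase M) := by
      rw [hB, Finset.erase_insert e0]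
    rw [f1, Finset.erase_insert e1, Finset.insert_erase hMA]
  exact ⟨hfr ▸ hB0, hfr ▸ hsum, by rw [hfr, hfrB]⟩

lemma frank_props {A : Finset ℕ} (h0 : 0 ∉ A) :
    0 ∉ frank A ∧ (frank A).sum id = A.sum id ∧ frank (frank A) = A := by
  rcases A.eq_empty_or_nonempty with rfl | hne
  · rw [frank_of_empty]
    exact ⟨h0, rfl, frank_of_empty⟩
  · by_cases hc : A.min' hne ≤ stair A (A.max' hne)
    · by_cases hx : A.max' hne + 1 = 2 * A.min' hne
      · have hfix : frank A = A := by rw [frank_of_pos hne h0, if_pos hc, if_pos hx]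
        rw [hfix]; exact ⟨h0, rfl, hfix⟩
      · exact case1_all hne h0 hc hx
    · by_cases hx : A.max' hne = 2 * stair A (A.max' hne)
      · have hfix : frank A = A := by rw [frank_of_pos hne h0, if_neg hc, if_pos hx]
        rw [hfix]; exact ⟨h0, rfl, hfix⟩
      · exact case2_all hne h0 hc hx

lemma frank_fixed_iff {A : Finset ℕ} (h0 : 0 ∉ A) :
    frank A = A ↔
      ∃ k, A = Finset.Icc (k + 1) (2 * k) ∨ (1 ≤ k ∧ A = Finset.Icc k (2 * k - 1)) := by
  constructor
  · intro hfix
    rcases A.eq_empty_or_nonempty with rfl | hne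
    · exact ⟨0, Or.inl (by rw [Finset.Icc_eq_empty (by omega)])⟩
    · obtain ⟨hσ1, hσM, hσout, hstep⟩ := stair_facts hne h0
      have hMA := A.max'_mem hne
      have hsA := A.min'_mem hne
      have hs1 : 1 ≤ A.min' hne := Nat.pos_of_ne_zero (fun h => h0 (h ▸ hsA))
      have hsM : A.min' hne ≤ A.max' hne := A.min'_le _ hMA
      by_cases hc : A.min' hne ≤ stair A (A.max' hne)
      · by_cases hx : A.max' hne + 1 = 2 * A.min' hne
        · refine ⟨A.min' hne, Or.inr ⟨hs1, ?_⟩⟩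
          ext x
          rw [Finset.mem_Icc]
          constructor
          · intro hxA
            have := A.min'_le x hxA
            have := A.le_max' x hxA
            omega
          · intro ⟨h1, h2⟩
            have h3 : A.max' hne - x < stair A (A.max' hne) := by omega
            have h4 := hstep _ h3
            have h5 : A.max' hne - (A.max' hne - x) = x := by omega
            rwa [h5] at h4
        · exfalso
          have h1 : frank A = insert (A.max' hne + 1)
              ((A.erase (A.min' hne)).erase (A.max' hne + 1 - A.min' hne)) := by
            rw [frank_of_pos hne h0, if_pos hc, if_neg hx]
          have h2 : A.max' hne + 1 ∈ frank A := by
            rw [h1]; exact Finset.mem_insert_self _ _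
          rw [hfix] at h2
          have := A.le_max' _ h2
          omega
      · by_cases hx : A.max' hne = 2 * stair A (A.max' hne)
        · refine ⟨stair A (A.max' hne), Or.inl ?_⟩
          ext x
          rw [Finset.mem_Icc]
          constructor
          · intro hxA
            have := A.min'_le x hxA
            have := A.le_max' x hxA
            omega
          · intro ⟨h1, h2⟩
            have h3 : A.max' hne - x < stair A (A.max' hne) := by omega
            have h4 := hstep _ h3
            have h5 : A.max' hne - (A.max' hne - x) = x := by omega
            rwa [h5] at h4
        · exfalso
          have h1 : frank A = insert (stair A (A.max' hne))
              (insert (A.max' hne - stair A (A.max' hne)) (A.erase (A.max' hne))) := by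
            rw [frank_of_pos hne h0, if_neg hc, if_neg hx]
          have h2 : stair A (A.max' hne) ∈ frank A := by
            rw [h1]; exact Finset.mem_insert_self _ _
          rw [hfix] at h2
          have := A.min'_le _ h2
          omega
  · rintro ⟨k, rfl | ⟨hk1, rfl⟩⟩
    · rcases Nat.eq_zero_or_pos k with rfl | hk1
      · rw [show Finset.Icc (0 + 1) (2 * 0) = ∅ from Finset.Icc_eq_empty (by omega)]
        exact frank_of_empty
      · have hne : (Finset.Icc (k + 1) (2 * k)).Nonempty :=
          Finset.nonempty_Icc.2 (by omega)
        have hmax : (Finset.Icc (k + 1) (2 * k)).max' hne = 2 * k := by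
          apply le_antisymm
          · exact Finset.max'_le _ _ _ (fun x hx => (Finset.mem_Icc.1 hx).2)
          · exact Finset.le_max' _ _ (Finset.mem_Icc.2 (by omega))
        have hmin : (Finset.Icc (k + 1) (2 * k)).min' hne = k + 1 := by
          apply le_antisymm
          · exact Finset.min'_le _ _ (Finset.mem_Icc.2 (by omega))
          · exact Finset.le_min' _ _ _ (fun x hx => (Finset.mem_Icc.1 hx).1)
        have hstair : stair (Finset.Icc (k + 1) (2 * k)) (2 * k) = k := by
          apply le_antisymm
          · apply Nat.sInf_le
            show 2 * k - k ∉ _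
            rw [Finset.mem_Icc]; omega
          · by_contra hlt
            push_neg at hlt
            have hne' : (setOf fun j => 2 * k - j ∉ Finset.Icc (k + 1) (2 * k)).Nonempty :=
              ⟨k, by show 2 * k - k ∉ Finset.Icc (k + 1) (2 * k); rw [Finset.mem_Icc]; omega⟩
            have hout : 2 * k - stair (Finset.Icc (k + 1) (2 * k)) (2 * k) ∉
                Finset.Icc (k + 1) (2 * k) := Nat.sInf_mem hne'
            rw [Finset.mem_Icc] at hout
            omega
        rw [frank_of_pos hne (by rw [Finset.mem_Icc]; omega), hmax, hmin, hstair,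
          if_neg (by omega), if_pos rfl]
    · have hne : (Finset.Icc k (2 * k - 1)).Nonempty := Finset.nonempty_Icc.2 (by omega)
      have hmax : (Finset.Icc k (2 * k - 1)).max' hne = 2 * k - 1 := by
        apply le_antisymm
        · exact Finset.max'_le _ _ _ (fun x hx => (Finset.mem_Icc.1 hx).2)
        · exact Finset.le_max' _ _ (Finset.mem_Icc.2 (by omega))
      have hmin : (Finset.Icc k (2 * k - 1)).min' hne = k := by
        apply le_antisymm
        · exact Finset.min'_le _ _ (Finset.mem_Icc.2 (by omega))
        · exact Finset.le_min' _ _ _ (fun x hx => (Finset.mem_Icc.1 hx).1)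
      have hstair : stair (Finset.Icc k (2 * k - 1)) (2 * k - 1) = k := by
        apply le_antisymm
        · apply Nat.sInf_le
          show 2 * k - 1 - k ∉ _
          rw [Finset.mem_Icc]; omega
        · by_contra hlt
          push_neg at hlt
          have hne' : (setOf fun j => 2 * k - 1 - j ∉ Finset.Icc k (2 * k - 1)).Nonempty :=
            ⟨k, by show 2 * k - 1 - k ∉ Finset.Icc k (2 * k - 1); rw [Finset.mem_Icc]; omega⟩
          have hout : 2 * k - 1 - stair (Finset.Icc k (2 * k - 1)) (2 * k - 1) ∉
              Finset.Icc k (2 * k - 1) := Nat.sInf_mem hne'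
          rw [Finset.mem_Icc] at hout
          omega
      rw [frank_of_pos hne (by rw [Finset.mem_Icc]; omega), hmax, hmin, hstair,
        if_pos le_rfl, if_pos (by omega)]

noncomputable def T (n : ℕ) : Finset (Finset ℕ) :=
  ((Finset.range (n + 1)).powerset).filter (fun A => 0 ∉ A ∧ A.sum id = n)

lemma mem_T {n : ℕ} {A : Finset ℕ} : A ∈ T n ↔ 0 ∉ A ∧ A.sum id = n := by
  rw [T, Finset.mem_filter, Finset.mem_powerset]
  constructor
  · tauto
  · rintro ⟨h0, hs⟩
    refine ⟨fun x hx => Finset.mem_range.2 ?_, h0, hs⟩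
    have : x ≤ A.sum id := Finset.single_le_sum (f := id) (fun i _ => Nat.zero_le i) hx
    omega

lemma D1_eq_T (n : ℕ) : D1 n = (T n).card := by
  apply Finset.card_bij (fun l _ => l.parts.toFinset)
  · intro l hl
    rw [Nat.Partition.distincts, Finset.mem_filter] at hl
    have hd : l.parts.Nodup := hl.2
    rw [mem_T]
    constructor
    · intro h
      rw [Multiset.mem_toFinset] at h
      exact absurd (l.parts_pos h) (by omega)
    · have : l.parts.toFinset.sum id = l.parts.sum := by
        rw [Finset.sum_eq_multiset_sum, Multiset.toFinset_val, Multiset.dedup_eq_self.2 hd,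
          Multiset.map_id]
      rw [this, l.parts_sum]
  · intro l1 h1 l2 h2 heq
    rw [Nat.Partition.distincts, Finset.mem_filter] at h1 h2
    ext1
    have e1 : l1.parts.toFinset.val = l1.parts := by
      rw [Multiset.toFinset_val, Multiset.dedup_eq_self.2 h1.2]
    have e2 : l2.parts.toFinset.val = l2.parts := by
      rw [Multiset.toFinset_val, Multiset.dedup_eq_self.2 h2.2]
    rw [← e1, ← e2, heq]
  · intro A hA
    rw [mem_T] at hA
    have hsum : A.val.sum = n := by
      rw [← hA.2, Finset.sum_eq_multiset_sum, Multiset.map_id]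
    refine ⟨⟨A.val, ?_, hsum⟩, ?_, ?_⟩
    · intro i hi
      have : i ∈ A := hi
      rcases Nat.eq_zero_or_pos i with rfl | h
      · exact absurd this hA.1
      · exact h
    · rw [Nat.Partition.distincts, Finset.mem_filter]
      exact ⟨Finset.mem_univ _, A.nodup⟩
    · exact Finset.val_toFinset A

lemma frank_mem_T {n : ℕ} {A : Finset ℕ} (hA : A ∈ T n) : frank A ∈ T n := by
  rw [mem_T] at hA ⊢
  obtain ⟨h0, hs⟩ := hA
  obtain ⟨p1, p2, _⟩ := frank_props h0
  exact ⟨p1, by rw [p2, hs]⟩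

lemma odd_iff_fixed (n : ℕ) :
    Odd (D1 n) ↔ Odd (((T n).filter fun A => frank A = A).card) := by
  rw [D1_eq_T]
  have he : Even (((T n).filter fun A => frank A ≠ A).card) :=
    even_card_filter_ne (T n) frank (fun A hA => frank_mem_T hA)
      (fun A hA => (frank_props (mem_T.1 hA).1).2.2)
  have hc := Finset.card_filter_add_card_filter_not
    (s := T n) (p := fun A => frank A = A)
  simp only [ne_eq] at he
  rw [Nat.odd_iff, Nat.odd_iff]
  obtain ⟨m, hm⟩ := he
  omega

lemma sum_shape1 (k : ℕ) : (Finset.Icc (k + 1) (2 * k)).sum id * 2 = k * (3 * k + 1) := by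
  have t := sum_Icc_two (k + 1) (2 * k) (by omega)
  have e : (k + 1) - 1 = k := by omega
  rw [e] at t
  have idd : (Finset.Icc (k + 1) (2 * k)).sum id = ∑ i ∈ Finset.Icc (k + 1) (2 * k), i := rfl
  have key : k * (3 * k + 1) + (k + 1) * k = (2 * k + 1) * (2 * k) := by ring
  rw [idd]
  linarith
lemma sum_shape2 (m : ℕ) :
    (Finset.Icc (m + 1) (2 * (m + 1) - 1)).sum id * 2 = (m + 1) * (3 * m + 2) := by
  have e2 : 2 * (m + 1) - 1 = 2 * m + 1 := by omega
  rw [e2]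
  have t := sum_Icc_two (m + 1) (2 * m + 1) (by omega)
  have e : (m + 1) - 1 = m := by omega
  rw [e] at t
  have idd : (Finset.Icc (m + 1) (2 * m + 1)).sum id
      = ∑ i ∈ Finset.Icc (m + 1) (2 * m + 1), i := rfl
  have key : (m + 1) * (3 * m + 2) + (m + 1) * m = (2 * m + 1 + 1) * (2 * m + 1) := by ring
  rw [idd]
  linarith

lemma uniq1 {a b : ℕ} (h : a * (3 * a + 1) = b * (3 * b + 1)) : a = b := by
  rcases lt_trichotomy a b with h' | h' | h'
  · nlinarith
  · exact h'
  · nlinarith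
lemma uniq2 {a b : ℕ} (h : (a + 1) * (3 * a + 2) = (b + 1) * (3 * b + 2)) : a = b := by
  rcases lt_trichotomy a b with h' | h' | h'
  · nlinarith
  · exact h'
  · nlinarith
lemma uniq3 {a b : ℕ} (h : (a + 1) * (3 * a + 2) = b * (3 * b + 1)) : False := by
  rcases le_or_gt b a with h' | h'
  · nlinarith
  · nlinarith

lemma fixed_shape_sum {n : ℕ} {A : Finset ℕ}
    (hA : A ∈ (T n).filter fun A => frank A = A) :
    ∃ k, (A = Finset.Icc (k + 1) (2 * k) ∧ n * 2 = k * (3 * k + 1)) ∨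
         (A = Finset.Icc (k + 1) (2 * (k + 1) - 1) ∧ n * 2 = (k + 1) * (3 * k + 2)) := by
  rw [Finset.mem_filter, mem_T] at hA
  obtain ⟨⟨h0, hsum⟩, hfix⟩ := hA
  obtain ⟨k, hk | ⟨hk1, hk⟩⟩ := (frank_fixed_iff h0).1 hfix
  · refine ⟨k, Or.inl ⟨hk, ?_⟩⟩
    have t := sum_shape1 k
    rw [← hk, hsum] at t
    exact t
  · obtain ⟨m, rfl⟩ : ∃ m, k = m + 1 := ⟨k - 1, by omega⟩
    refine ⟨m, Or.inr ⟨hk, ?_⟩⟩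
    have t := sum_shape2 m
    rw [← hk, hsum] at t
    exact t

lemma odd_card_shape1 {n k : ℕ} (h : n * 2 = k * (3 * k + 1)) :
    Odd (((T n).filter fun A => frank A = A).card) := by
  have h0 : (0 : ℕ) ∉ Finset.Icc (k + 1) (2 * k) := by rw [Finset.mem_Icc]; omega
  have hsum : (Finset.Icc (k + 1) (2 * k)).sum id = n := by
    have t := sum_shape1 k
    rw [← h] at t
    omega
  have hfix : frank (Finset.Icc (k + 1) (2 * k)) = Finset.Icc (k + 1) (2 * k) :=
    (frank_fixed_iff h0).2 ⟨k, Or.inl rfl⟩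
  have hsingle : ((T n).filter fun A => frank A = A) = {Finset.Icc (k + 1) (2 * k)} := by
    apply Finset.eq_singleton_iff_unique_mem.2
    refine ⟨Finset.mem_filter.2 ⟨mem_T.2 ⟨h0, hsum⟩, hfix⟩, ?_⟩
    intro B hB
    obtain ⟨k', ⟨hBeq, hs'⟩ | ⟨hBeq, hs'⟩⟩ := fixed_shape_sum hB
    · have : k' = k := uniq1 (hs'.symm.trans h)
      rw [hBeq, this]
    · exact absurd (hs'.symm.trans h) (fun hh => uniq3 hh)
  rw [hsingle, Finset.card_singleton]
  exact odd_one

lemma odd_card_shape2 {n m : ℕ} (h : n * 2 = (m + 1) * (3 * m + 2)) :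
    Odd (((T n).filter fun A => frank A = A).card) := by
  have h0 : (0 : ℕ) ∉ Finset.Icc (m + 1) (2 * (m + 1) - 1) := by rw [Finset.mem_Icc]; omega
  have hsum : (Finset.Icc (m + 1) (2 * (m + 1) - 1)).sum id = n := by
    have t := sum_shape2 m
    rw [← h] at t
    omega
  have hfix : frank (Finset.Icc (m + 1) (2 * (m + 1) - 1))
      = Finset.Icc (m + 1) (2 * (m + 1) - 1) :=
    (frank_fixed_iff h0).2 ⟨m + 1, Or.inr ⟨by omega, rfl⟩⟩
  have hsingle : ((T n).filter fun A => frank A = A)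
      = {Finset.Icc (m + 1) (2 * (m + 1) - 1)} := by
    apply Finset.eq_singleton_iff_unique_mem.2
    refine ⟨Finset.mem_filter.2 ⟨mem_T.2 ⟨h0, hsum⟩, hfix⟩, ?_⟩
    intro B hB
    obtain ⟨k', ⟨hBeq, hs'⟩ | ⟨hBeq, hs'⟩⟩ := fixed_shape_sum hB
    · exact absurd (hs'.symm.trans h) (fun hh => uniq3 hh.symm)
    · have : k' = m := uniq2 (hs'.symm.trans h)
      rw [hBeq, this]
  rw [hsingle, Finset.card_singleton]
  exact odd_one

end Stmt17Aux

theorem stmt17 (n : ℕ) :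
    Odd (D1 n) ↔ ∃ j : ℕ, n = j * (3 * j + 1) / 2 ∨ n = j * (3 * j - 1) / 2 := by
  rw [odd_iff_fixed]
  constructor
  · intro hodd
    have hne : ((T n).filter fun A => frank A = A).Nonempty := by
      rcases Finset.eq_empty_or_nonempty ((T n).filter fun A => frank A = A) with h | h
      · rw [h] at hodd; simp at hodd
      · exact h
    obtain ⟨A, hA⟩ := hne
    obtain ⟨k, ⟨_, hsum⟩ | ⟨_, hsum⟩⟩ := fixed_shape_sum hA
    · refine ⟨k, Or.inl ?_⟩
      rw [← hsum]; omega
    · refine ⟨k + 1, Or.inr ?_⟩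
      have e : 3 * (k + 1) - 1 = 3 * k + 2 := by omega
      rw [e, ← hsum]; omega
  · rintro ⟨j, hj | hj⟩
    · obtain ⟨c, hc⟩ : ∃ c, j * (3 * j + 1) = 2 * c := by
        rcases Nat.even_or_odd j with ⟨m, rfl⟩ | ⟨m, rfl⟩
        · exact ⟨m * (3 * (m + m) + 1), by ring⟩
        · exact ⟨(2 * m + 1) * (3 * m + 2), by ring⟩
      rw [hc] at hj
      exact odd_card_shape1 (k := j) (by rw [hc]; omega)
    · rcases Nat.eq_zero_or_pos j with rfl | hj1
      · have hn : n = 0 := by simpa using hj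
        exact odd_card_shape1 (k := 0) (by omega)
      · obtain ⟨m, rfl⟩ : ∃ m, j = m + 1 := ⟨j - 1, by omega⟩
        have e : 3 * (m + 1) - 1 = 3 * m + 2 := by omega
        rw [e] at hj
        obtain ⟨c, hc⟩ : ∃ c, (m + 1) * (3 * m + 2) = 2 * c := by
          rcases Nat.even_or_odd m with ⟨t, rfl⟩ | ⟨t, rfl⟩
          · exact ⟨(t + t + 1) * (3 * t + 1), by ring⟩
          · exact ⟨(t + 1) * (3 * (2 * t + 1) + 2), by ring⟩
        rw [hc] at hj
        exact odd_card_shape2 (m := m) (by rw [hc]; omega)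
end

section
/- If n is odd, then D₂(n), the number of two-colored partitions of n into distinct parts, is even; and if n is even, then D₂(n) ≡ q(n/2) (mod 2), where q(m) is the number of partitions of m into distinct parts. -/
open scoped Classical

namespace Stmt18Aux

open Multiset

def swap2 : ℕ × Fin 2 → ℕ × Fin 2 := fun p => (p.1, p.2 + 1)

lemma fin2_add : ∀ c : Fin 2, c + 1 + 1 = c := by decide

lemma swap2_swap2 (p : ℕ × Fin 2) : swap2 (swap2 p) = p := by
  obtain ⟨s, c⟩ := p
  simp [swap2, fin2_add]

lemma swap2_inj : Function.Injective swap2 :=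
  Function.Involutive.injective swap2_swap2

/-- parity lemma for involutions -/
lemma card_modEq_card_fixed {α : Type*} [Fintype α] (f : α → α)
    (hf : ∀ x, f (f x) = x) :
    Fintype.card α ≡ Nat.card {x // f x = x} [MOD 2] := by
  classical
  rw [Nat.card_eq_fintype_card]
  have h1 : Fintype.card {x // f x = x} = (Finset.univ.filter fun x => f x = x).card :=
    Fintype.card_subtype _
  have h2 : (Finset.univ.filter fun x => f x = x).card
      + (Finset.univ.filter fun x => ¬ (f x = x)).card = Fintype.card α :=
    Finset.card_filter_add_card_filter_not _
  have h3 : (((Finset.univ.filter fun x => ¬ (f x = x)).card : ℕ) : ZMod 2) = 0 := by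
    rw [Finset.card_eq_sum_ones, Nat.cast_sum]
    push_cast
    refine Finset.sum_involution (fun a _ => f a) (fun a _ => show (1 : ZMod 2) + 1 = 0 by decide)
      (fun a ha _ => ?_) (fun a ha => ?_) (fun a ha => hf a)
    · exact (Finset.mem_filter.1 ha).2
    · simp only [Finset.mem_filter, Finset.mem_univ, true_and, hf a]
      exact fun h => (Finset.mem_filter.1 ha).2 h.symm
  have h4 : Even ((Finset.univ.filter fun x => ¬ (f x = x)).card) := by
    rw [Nat.even_iff, ← Nat.dvd_iff_mod_eq_zero]
    exact (ZMod.natCast_eq_zero_iff _ 2).1 h3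
  obtain ⟨k, hk⟩ := h4
  rw [h1]
  show Fintype.card α % 2 = _ % 2
  omega

lemma count_filter_map (m : Multiset (ℕ × Fin 2)) (c : Fin 2) (s : ℕ) :
    Multiset.count s ((m.filter fun p => p.2 = c).map Prod.fst) = m.count (s, c) := by
  classical
  rw [Multiset.count_map, Multiset.filter_filter, Multiset.count_eq_card_filter_eq]
  congr 1
  refine Multiset.filter_congr fun p _ => ?_
  obtain ⟨a, b⟩ := p
  constructor
  · rintro ⟨h1, h2⟩; simp_all [Prod.ext_iff]
  · rintro h; simp_all [Prod.ext_iff]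

lemma count_map_mk (t : Multiset ℕ) (c : Fin 2) (s : ℕ) :
    (t.map fun a => (a, c)).count (s, c) = t.count s := by
  classical
  exact Multiset.count_map_eq_count' (fun a => (a, c)) t
    (fun a b h => by simpa [Prod.ext_iff] using h) s

lemma count_map_mk_ne (t : Multiset ℕ) (c c' : Fin 2) (h : c ≠ c') (s : ℕ) :
    (t.map fun a => (a, c)).count (s, c') = 0 := by
  classical
  rw [Multiset.count_eq_zero]
  intro hmem
  obtain ⟨a, _, ha⟩ := Multiset.mem_map.1 hmem
  have := (Prod.ext_iff.1 ha).2
  exact h this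

lemma finite_S (n : ℕ) :
    Finite {m : Multiset (ℕ × Fin 2) // IsColoredPartition n m ∧ m.Nodup} := by
  classical
  set A : Finset (ℕ × Fin 2) := (Finset.range (n + 1)) ×ˢ Finset.univ with hA
  have key : ∀ m : {m : Multiset (ℕ × Fin 2) // IsColoredPartition n m ∧ m.Nodup},
      m.1.toFinset ∈ A.powerset := by
    rintro ⟨m, ⟨hpos, hsum⟩, hnd⟩
    rw [Finset.mem_powerset]
    intro p hp
    rw [Multiset.mem_toFinset] at hp
    have h1 : p.1 ≤ n := by
      have : p.1 ∈ m.map Prod.fst := Multiset.mem_map_of_mem _ hp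
      calc p.1 ≤ (m.map Prod.fst).sum :=
        Multiset.single_le_sum (fun x _ => Nat.zero_le x) _ this
      _ = n := hsum
    simp [hA, Finset.mem_product, Nat.lt_succ_iff, h1]
  refine Finite.of_injective
    (fun m => (⟨m.1.toFinset, key m⟩ : {t // t ∈ A.powerset})) ?_
  rintro ⟨m1, hm1⟩ ⟨m2, hm2⟩ h
  have h' : m1.toFinset = m2.toFinset := by simpa using h
  have e1 : m1.toFinset.val = m1 := by
    rw [Multiset.toFinset_val, hm1.2.dedup]
  have e2 : m2.toFinset.val = m2 := by
    rw [Multiset.toFinset_val, hm2.2.dedup]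
  exact Subtype.ext (e1.symm.trans (by rw [h', e2]))

end Stmt18Aux

theorem stmt18 (n : ℕ) :
    (Odd n → Even (D2 n)) ∧ (Even n → D2 n ≡ D1 (n / 2) [MOD 2]) := by
  classical
  open Stmt18Aux in
  haveI : Finite {m : Multiset (ℕ × Fin 2) // IsColoredPartition n m ∧ m.Nodup} :=
    Stmt18Aux.finite_S n
  haveI : Fintype {m : Multiset (ℕ × Fin 2) // IsColoredPartition n m ∧ m.Nodup} :=
    Fintype.ofFinite _
  have hfst : Prod.fst ∘ Stmt18Aux.swap2 = Prod.fst := funext fun p => rfl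
  -- the color-swap involution
  have hpres : ∀ x : {m : Multiset (ℕ × Fin 2) // IsColoredPartition n m ∧ m.Nodup},
      IsColoredPartition n (x.1.map Stmt18Aux.swap2) ∧ (x.1.map Stmt18Aux.swap2).Nodup := by
    rintro ⟨m, ⟨hpos, hsum⟩, hnd⟩
    refine ⟨⟨?_, ?_⟩, hnd.map Stmt18Aux.swap2_inj⟩
    · intro p hp
      obtain ⟨q, hq, rfl⟩ := Multiset.mem_map.1 hp
      exact hpos q hq
    · rw [Multiset.map_map, hfst]; exact hsum
  set σ : {m : Multiset (ℕ × Fin 2) // IsColoredPartition n m ∧ m.Nodup} →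
      {m : Multiset (ℕ × Fin 2) // IsColoredPartition n m ∧ m.Nodup} :=
    fun x => ⟨x.1.map Stmt18Aux.swap2, hpres x⟩ with hσ
  have hσσ : ∀ x, σ (σ x) = x := by
    intro x
    apply Subtype.ext
    show (x.1.map Stmt18Aux.swap2).map Stmt18Aux.swap2 = x.1
    rw [Multiset.map_map]
    calc x.1.map (Stmt18Aux.swap2 ∘ Stmt18Aux.swap2)
        = x.1.map id := Multiset.map_congr rfl fun p _ => Stmt18Aux.swap2_swap2 p
      _ = x.1 := Multiset.map_id _
  have hpar : D2 n ≡ Nat.card {x : {m : Multiset (ℕ × Fin 2) //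
      IsColoredPartition n m ∧ m.Nodup} // σ x = x} [MOD 2] := by
    rw [D2, Nat.card_eq_fintype_card]
    exact Stmt18Aux.card_modEq_card_fixed σ hσσ
  -- analysis of fixed points
  have hdecomp : ∀ x : {m : Multiset (ℕ × Fin 2) // IsColoredPartition n m ∧ m.Nodup},
      σ x = x →
      (x.1 = ((x.1.filter fun p => p.2 = 0).map Prod.fst).map (fun a => (a, (0 : Fin 2)))
           + ((x.1.filter fun p => p.2 = 0).map Prod.fst).map (fun a => (a, (1 : Fin 2)))) ∧
      ((x.1.filter fun p => p.2 = 0).map Prod.fst).sum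
        + ((x.1.filter fun p => p.2 = 0).map Prod.fst).sum = n := by
    rintro ⟨m, ⟨hpos, hsum⟩, hnd⟩ hfix
    have hfixv : m.map Stmt18Aux.swap2 = m := congrArg Subtype.val hfix
    set T : Multiset ℕ := (m.filter fun p => p.2 = 0).map Prod.fst with hT
    have hcnt : ∀ s : ℕ, m.count (s, (1 : Fin 2)) = m.count (s, (0 : Fin 2)) := by
      intro s
      have h1 : (m.map Stmt18Aux.swap2).count (Stmt18Aux.swap2 (s, 0)) = m.count (s, 0) :=
        Multiset.count_map_eq_count' _ m Stmt18Aux.swap2_inj _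
      have h2 : Stmt18Aux.swap2 (s, (0 : Fin 2)) = (s, (1 : Fin 2)) := rfl
      rw [hfixv, h2] at h1
      exact h1
    have hmeq : m = T.map (fun a => (a, (0 : Fin 2))) + T.map (fun a => (a, (1 : Fin 2))) := by
      ext p
      obtain ⟨s, c⟩ := p
      rw [Multiset.count_add]
      have hc : c = 0 ∨ c = 1 := by
        fin_cases c
        · exact Or.inl rfl
        · exact Or.inr rfl
      rcases hc with rfl | rfl
      · rw [Stmt18Aux.count_map_mk, Stmt18Aux.count_map_mk_ne T 1 0 (by decide),
          hT, Stmt18Aux.count_filter_map]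
        omega
      · rw [Stmt18Aux.count_map_mk, Stmt18Aux.count_map_mk_ne T 0 1 (by decide),
          hT, Stmt18Aux.count_filter_map, hcnt s]
        omega
    refine ⟨hmeq, ?_⟩
    have : (m.map Prod.fst).sum = T.sum + T.sum := by
      conv_lhs => rw [hmeq]
      rw [Multiset.map_add, Multiset.map_map, Multiset.map_map, Multiset.sum_add]
      simp [Function.comp]
      rfl
    omega
  constructor
  · -- odd case
    intro hodd
    haveI : IsEmpty {x : {m : Multiset (ℕ × Fin 2) //
        IsColoredPartition n m ∧ m.Nodup} // σ x = x} := by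
      refine ⟨fun x => ?_⟩
      obtain ⟨-, hs⟩ := hdecomp x.1 x.2
      obtain ⟨k, hk⟩ := hodd
      omega
    have h0 : Nat.card {x : {m : Multiset (ℕ × Fin 2) //
        IsColoredPartition n m ∧ m.Nodup} // σ x = x} = 0 := by
      rw [Nat.card_eq_fintype_card, Fintype.card_eq_zero]
    rw [h0] at hpar
    rw [Nat.even_iff]
    simpa [Nat.ModEq] using hpar
  · -- even case
    intro heven
    obtain ⟨h, rfl⟩ := heven
    have hh : (h + h) / 2 = h := by omega
    rw [hh]
    refine hpar.trans ?_
    have hcard : Nat.card {x : {m : Multiset (ℕ × Fin 2) //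
        IsColoredPartition (h + h) m ∧ m.Nodup} // σ x = x}
        = Nat.card {l : Nat.Partition h // l.parts.Nodup} := by
      apply Nat.card_congr
      refine
        { toFun := fun x => ⟨⟨(x.1.1.filter fun p => p.2 = 0).map Prod.fst, ?_, ?_⟩, ?_⟩
          invFun := fun l => ⟨⟨l.1.parts.map (fun a => (a, (0 : Fin 2)))
              + l.1.parts.map (fun a => (a, (1 : Fin 2))), ⟨?_, ?_⟩, ?_⟩, ?_⟩
          left_inv := ?_
          right_inv := ?_ }
      · -- parts positive
        intro i hi
        obtain ⟨p, hp, rfl⟩ := Multiset.mem_map.1 hi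
        exact x.1.2.1.1 p (Multiset.mem_of_mem_filter hp)
      · -- parts sum
        have := (hdecomp x.1 x.2).2
        omega
      · -- nodup
        rw [Multiset.nodup_iff_count_le_one]
        intro s
        rw [Stmt18Aux.count_filter_map]
        exact Multiset.nodup_iff_count_le_one.1 x.1.2.2 _
      · -- colored partition positivity
        intro p hp
        rcases Multiset.mem_add.1 hp with hp | hp <;>
          · obtain ⟨a, ha, rfl⟩ := Multiset.mem_map.1 hp
            exact l.1.parts_pos ha
      · -- colored partition sum
        rw [Multiset.map_add, Multiset.map_map, Multiset.map_map]
        simp [Function.comp, l.1.parts_sum]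
      · -- nodup of the colored multiset
        rw [Multiset.nodup_add]
        refine ⟨l.2.map ?_, l.2.map ?_, ?_⟩
        · intro a b hab
          exact (Prod.ext_iff.1 hab).1
        · intro a b hab
          exact (Prod.ext_iff.1 hab).1
        · rw [Multiset.disjoint_left]
          rintro p hp0 hp1
          obtain ⟨a, -, rfl⟩ := Multiset.mem_map.1 hp0
          obtain ⟨b, -, hb⟩ := Multiset.mem_map.1 hp1
          have h10 : (1 : Fin 2) = 0 := (Prod.ext_iff.1 hb).2
          exact absurd h10 (by decide)
      · -- fixed by σ
        apply Subtype.ext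
        show Multiset.map Stmt18Aux.swap2 _ = _
        rw [Multiset.map_add, Multiset.map_map, Multiset.map_map]
        have e0 : Stmt18Aux.swap2 ∘ (fun a : ℕ => (a, (0 : Fin 2)))
            = fun a : ℕ => (a, (1 : Fin 2)) := funext fun a => rfl
        have e1 : Stmt18Aux.swap2 ∘ (fun a : ℕ => (a, (1 : Fin 2)))
            = fun a : ℕ => (a, (0 : Fin 2)) := by
          funext a
          show (a, (1 : Fin 2) + 1) = (a, (0 : Fin 2))
          rw [show (1 : Fin 2) + 1 = 0 from by decide]
        rw [e0, e1, add_comm]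
      · -- left inverse
        rintro x
        apply Subtype.ext
        apply Subtype.ext
        exact ((hdecomp x.1 x.2).1).symm
      · -- right inverse
        rintro ⟨l, hl⟩
        apply Subtype.ext
        apply Nat.Partition.ext
        show Multiset.map Prod.fst (Multiset.filter (fun p => p.2 = 0)
            (Multiset.map (fun a => (a, (0 : Fin 2))) l.parts
              + Multiset.map (fun a => (a, (1 : Fin 2))) l.parts)) = l.parts
        rw [Multiset.filter_add,
          Multiset.filter_eq_self.2 (by
            rintro p hp
            obtain ⟨a, -, rfl⟩ := Multiset.mem_map.1 hp
            rfl),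
          Multiset.filter_eq_nil.2 (by
            rintro p hp
            obtain ⟨a, -, rfl⟩ := Multiset.mem_map.1 hp
            exact fun hcon => one_ne_zero hcon),
          add_zero, Multiset.map_map]
        simp [Function.comp]
    rw [hcard]
    have hD1 : D1 h = Nat.card {l : Nat.Partition h // l.parts.Nodup} := by
      rw [D1, ← Nat.card_eq_finsetCard]
      refine Nat.card_congr (Equiv.subtypeEquivRight fun l => ?_)
      simp [Nat.Partition.distincts]
    rw [hD1]
end
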